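/- arXiv:2103.12658 — 8 statements merged into one kernel-verified Lean document; each statement's English description precedes it below -/
import Mathlib

section
/- Let M₁ and M₂ be matroids on a common finite ground set Ê such that rk(M₁ ∨ M₂) = rk(M₁) + rk(M₂), where M̂ = M₁ ∨ M₂ is the matroid union, and suppose there is a basis B₂ of M₂ consisting entirely of loops of M₁. If D is a cocircuit of M₁, then D is also a cocircuit of M̂. -/
open Set Matroid
namespace NL
variable {γ : Type*}

/-- Rank of a set in a matroid: the max size of an independent subset. -/
noncomputable def rk (M : Matroid γ) (X : Set γ) : ℕ :=
  sSup {n | ∃ I, M.Indep I ∧ I ⊆ X ∧ I.ncard = n}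

/-- A cocircuit: a minimal set meeting every base. -/
def Cocircuit (M : Matroid γ) (D : Set γ) : Prop :=
  D ⊆ M.E ∧ (∀ B, M.IsBase B → (D ∩ B).Nonempty) ∧
    ∀ D' ⊂ D, ∃ B, M.IsBase B ∧ D' ∩ B = ∅

/-- A loop: an element contained in no independent set. -/
def MLoop (M : Matroid γ) (e : γ) : Prop := e ∈ M.E ∧ ¬ M.Indep {e}

/-- Parallel elements: distinct non-loops forming a dependent pair. -/
def MParallel (M : Matroid γ) (e f : γ) : Prop :=
  e ≠ f ∧ M.Indep {e} ∧ M.Indep {f} ∧ ¬ M.Indep {e, f}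

/-- Deletion of the set `X`. -/
noncomputable def mdelete (M : Matroid γ) (X : Set γ) : Matroid γ := M ↾ (M.E \ X)

/-- Contraction of the set `X`, defined by duality. -/
noncomputable def mcontract (M : Matroid γ) (X : Set γ) : Matroid γ := (M✶ ↾ (M✶.E \ X))✶

/-- `X` is a union of cocircuits of `M` (equivalently, the complement of a flat). -/
def UnionOfCocircuits (M : Matroid γ) (X : Set γ) : Prop :=
  ∃ S : Set (Set γ), (∀ D ∈ S, Cocircuit M D) ∧ X = ⋃₀ S

/-- The rank of `X` in the lattice of unions of cocircuits of `M` ordered by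
inclusion: the maximal length of a chain from `∅` to `X` in this lattice. -/
noncomputable def latticeRk (M : Matroid γ) (X : Set γ) : ℕ :=
  sSup {k | ∃ c : Fin (k+1) → Set γ, StrictMono c ∧ (∀ i, UnionOfCocircuits M (c i)) ∧
    c 0 = ∅ ∧ c (Fin.last k) = X}


lemma ncard_le_of_indep {M : Matroid γ} {I B : Set γ} (hfin : M.E.Finite)
    (hI : M.Indep I) (hB : M.IsBase B) : I.ncard ≤ B.ncard := by
  obtain ⟨B', hB', hIB'⟩ := hI.exists_isBase_superset
  calc I.ncard ≤ B'.ncard :=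
        Set.ncard_le_ncard hIB' (hfin.subset hB'.subset_ground)
    _ = B.ncard := hB'.ncard_eq_ncard_of_isBase hB

lemma rk_eq_base_ncard {M : Matroid γ} {B : Set γ} (hfin : M.E.Finite)
    (hB : M.IsBase B) : rk M M.E = B.ncard := by
  apply le_antisymm
  · exact csSup_le ⟨0, ∅, M.empty_indep, empty_subset _, by simp⟩
      (by rintro n ⟨I, hI, -, rfl⟩; exact ncard_le_of_indep hfin hI hB)
  · exact le_csSup ⟨B.ncard, by rintro n ⟨I, hI, -, rfl⟩; exact ncard_le_of_indep hfin hI hB⟩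
      ⟨B, hB.indep, hB.subset_ground, rfl⟩

lemma indep_ncard_le_rk {M : Matroid γ} {I : Set γ} (hfin : M.E.Finite)
    (hI : M.Indep I) : I.ncard ≤ rk M M.E := by
  obtain ⟨B, hB, -⟩ := hI.exists_isBase_superset
  rw [rk_eq_base_ncard hfin hB]
  exact ncard_le_of_indep hfin hI hB

lemma base_of_ncard_eq_rk {M : Matroid γ} {I : Set γ} (hfin : M.E.Finite)
    (hI : M.Indep I) (hc : I.ncard = rk M M.E) : M.IsBase I := by
  obtain ⟨B, hB, hIB⟩ := hI.exists_isBase_superset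
  have hBI : I = B := Set.eq_of_subset_of_ncard_le hIB
    (by rw [hc, rk_eq_base_ncard hfin hB]) (hfin.subset hB.subset_ground)
  rwa [hBI]

/-- if `M̂ = M₁ ∨ M₂` with `rk(M̂) = rk(M₁) + rk(M₂)` and some base of
`M₂` consists of loops of `M₁`, then every cocircuit of `M₁` is a cocircuit of `M̂`. -/
theorem cocircuit_of_union (M₁ M₂ Mhat : Matroid γ) (hfin : Mhat.E.Finite)
    (hE12 : M₁.E = M₂.E) (hEh : Mhat.E = M₁.E)
    (hU : ∀ I, Mhat.Indep I ↔ ∃ I₁ I₂, M₁.Indep I₁ ∧ M₂.Indep I₂ ∧ I = I₁ ∪ I₂)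
    (hrk : rk Mhat Mhat.E = rk M₁ M₁.E + rk M₂ M₂.E)
    (hB2 : ∃ B₂, M₂.IsBase B₂ ∧ ∀ e ∈ B₂, MLoop M₁ e)
    (D : Set γ) (hD : Cocircuit M₁ D) :
    Cocircuit Mhat D := by
  obtain ⟨hDE, hDmeet, hDmin⟩ := hD
  obtain ⟨B₂, hB₂, hB₂loop⟩ := hB2
  have hfin1 : M₁.E.Finite := hEh ▸ hfin
  have hfin2 : M₂.E.Finite := hE12 ▸ hfin1
  -- B₂ is disjoint from every M₁-independent set
  have hdisj : ∀ I, M₁.Indep I → Disjoint I B₂ := by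
    intro I hI
    rw [Set.disjoint_right]
    intro e he heI
    exact (hB₂loop e he).2 (hI.subset (by simpa using heI))
  -- D contains no loops of M₁
  have hDnoloop : ∀ e ∈ D, ¬ MLoop M₁ e := by
    intro e heD hloop
    obtain ⟨B, hB, hBd⟩ := hDmin (D \ {e}) (Set.sdiff_singleton_ssubset.mpr heD)
    obtain ⟨f, hfD, hfB⟩ := hDmeet B hB
    have hfe : f = e := by
      by_contra hne
      exact absurd (Set.eq_empty_iff_forall_notMem.mp hBd f ⟨⟨hfD, hne⟩, hfB⟩) (by simp)
    exact hloop.2 (hB.indep.subset (by simpa [← hfe] using hfB))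
  refine ⟨hEh ▸ hDE, ?_, ?_⟩
  · -- D meets every base of Mhat
    intro B hB
    obtain ⟨I₁, I₂, hI₁, hI₂, rfl⟩ := (hU _).mp hB.indep
    have h1 : I₁.ncard ≤ rk M₁ M₁.E := indep_ncard_le_rk hfin1 hI₁
    have h2 : I₂.ncard ≤ rk M₂ M₂.E := indep_ncard_le_rk hfin2 hI₂
    have hBcard : (I₁ ∪ I₂).ncard = rk Mhat Mhat.E := rk_eq_base_ncard hfin hB |>.symm
    have hle : (I₁ ∪ I₂).ncard ≤ I₁.ncard + I₂.ncard := Set.ncard_union_le I₁ I₂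
    have hI1card : I₁.ncard = rk M₁ M₁.E := by omega
    have hbase1 : M₁.IsBase I₁ := base_of_ncard_eq_rk hfin1 hI₁ hI1card
    obtain ⟨f, hfD, hfI₁⟩ := hDmeet I₁ hbase1
    exact ⟨f, hfD, Or.inl hfI₁⟩
  · -- minimality
    intro D' hD'
    obtain ⟨B₁, hB₁, hB₁d⟩ := hDmin D' hD'
    have hdj : Disjoint B₁ B₂ := hdisj B₁ hB₁.indep
    have hfinB1 : B₁.Finite := hfin1.subset hB₁.subset_ground
    have hfinB2 : B₂.Finite := hfin2.subset hB₂.subset_ground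
    have hind : Mhat.Indep (B₁ ∪ B₂) := (hU _).mpr ⟨B₁, B₂, hB₁.indep, hB₂.indep, rfl⟩
    have hcard : (B₁ ∪ B₂).ncard = rk Mhat Mhat.E := by
      rw [Set.ncard_union_eq hdj hfinB1 hfinB2, hrk,
        rk_eq_base_ncard hfin1 hB₁, rk_eq_base_ncard hfin2 hB₂]
    refine ⟨B₁ ∪ B₂, base_of_ncard_eq_rk hfin hind hcard, ?_⟩
    rw [Set.inter_union_distrib_left, hB₁d, Set.empty_union,
      Set.eq_empty_iff_forall_notMem]
    rintro e ⟨heD', heB₂⟩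
    exact hDnoloop e (hD'.subset heD') (hB₂loop e heB₂)


end NL
end

section
/- Let M be a matroid on E = {1,…,n} of rank r with basis {1,…,r}, and let M̂ be the matroid union M₁ ∨ M₂ on Ê = E ∪ A ∪ B constructed as follows: M₁ extends M by elements A = {n+1,…,n+r} with n+i parallel to i for 1 ≤ i ≤ r, and all of B = {n+r+1,…,2n} ∪ {n+i : r+1 ≤ i ≤ n} appropriate loops; M₂ extends the dual M* by elements of B parallel to the corresponding elements of E \ {1,…,r} and elements of A as loops. Then M̂ \ A / B = M and M̂ / A \ B = M*. -/
open Set Matroid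
namespace NL
variable {γ : Type*}

lemma swap_aux {N : Matroid γ} {e f : γ} (h : MParallel N e f) {I : Set γ}
    (he : e ∉ I) (hf : f ∉ I) (hI : N.Indep (insert e I)) : N.Indep (insert f I) := by
  obtain ⟨hne, hee, hff, hef⟩ := h
  have hI0 : N.Indep I := hI.subset (subset_insert _ _)
  have hfE : f ∈ N.E := hff.subset_ground rfl
  have heE : e ∈ N.E := hee.subset_ground rfl
  have hecl : e ∈ N.closure {f} := by
    by_contra hc
    exact hef ((hff.insert_indep_iff_of_notMem (by simp [hne])).mpr ⟨heE, hc⟩)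
  rw [hI0.insert_indep_iff_of_notMem hf]
  refine ⟨hfE, fun hfclI => ?_⟩
  have hsub : N.closure {f} ⊆ N.closure I := by
    calc N.closure {f} ⊆ N.closure (N.closure I) :=
          N.closure_subset_closure (singleton_subset_iff.2 hfclI)
      _ = N.closure I := N.closure_closure I
  exact ((hI0.insert_indep_iff_of_notMem he).mp hI).2 (hsub hecl)

lemma swap_iff {N : Matroid γ} {e f : γ} (h : MParallel N e f) {I : Set γ}
    (he : e ∉ I) (hf : f ∉ I) : N.Indep (insert e I) ↔ N.Indep (insert f I) := by
  have h' : MParallel N f e :=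
    ⟨h.1.symm, h.2.2.1, h.2.1, fun hi => h.2.2.2 (Set.pair_comm f e ▸ hi)⟩
  exact ⟨swap_aux h he hf, swap_aux h' hf he⟩

lemma swap_block (N : Matroid ℕ) (n : ℕ) :
    ∀ T : Finset ℕ, (∀ i ∈ T, MParallel N i (n+i)) → (∀ i ∈ T, 1 ≤ i ∧ i ≤ n) →
    ∀ X : Set ℕ, (∀ x ∈ X, x ≤ n) → (∀ i ∈ T, i ∉ X) →
    (N.Indep (X ∪ ↑T) ↔ N.Indep (X ∪ ↑(T.image (fun i => n + i)))) := by
  intro T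
  induction T using Finset.induction_on with
  | empty => intro _ _ X _ _; simp
  | @insert a T' ha ih =>
    intro hpar hT X hX hXT
    have ha1 : 1 ≤ a := (hT a (Finset.mem_insert_self a T')).1
    have han : a ≤ n := (hT a (Finset.mem_insert_self a T')).2
    have haX : a ∉ X := hXT a (Finset.mem_insert_self a T')
    have ih' := ih (fun i hi => hpar i (Finset.mem_insert_of_mem hi))
      (fun i hi => hT i (Finset.mem_insert_of_mem hi)) (insert a X)
      (fun x hx => by rcases hx with rfl | hx; exact han; exact hX x hx)
      (fun i hi hmem => by
        rcases hmem with rfl | hmem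
        · exact ha hi
        · exact hXT i (Finset.mem_insert_of_mem hi) hmem)
    rw [Finset.coe_insert, Set.union_insert, Finset.image_insert, Finset.coe_insert,
      Set.union_insert]
    have hana : a ∉ X ∪ ↑(T'.image fun i => n + i) := by
      rintro (h | h)
      · exact haX h
      · simp only [Finset.coe_image, Set.mem_image, Finset.mem_coe] at h
        obtain ⟨i, hi, hia⟩ := h
        have := (hT i (Finset.mem_insert_of_mem hi)).1
        omega
    have hnaa : n + a ∉ X ∪ ↑(T'.image fun i => n + i) := by
      rintro (h | h)
      · have := hX _ h; omega
      · simp only [Finset.coe_image, Set.mem_image, Finset.mem_coe] at h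
        obtain ⟨i, hi, hia⟩ := h
        have : i = a := by omega
        exact ha (this ▸ hi)
    calc N.Indep (insert a (X ∪ ↑T'))
        ↔ N.Indep (insert a (X ∪ ↑(T'.image fun i => n + i))) := by
          rw [← Set.insert_union, ← Set.insert_union]; exact ih'
      _ ↔ N.Indep (insert (n+a) (X ∪ ↑(T'.image fun i => n + i))) :=
          swap_iff (hpar a (Finset.mem_insert_self a T')) hana hnaa

lemma mcontract_indep_iff {N : Matroid γ} {C : Set γ} (hC : N.Indep C) (I : Set γ) :
    (mcontract N C).Indep I ↔ Disjoint I C ∧ N.Indep (I ∪ C) := by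
  have hCE : C ⊆ N.E := hC.subset_ground
  rw [mcontract, dual_indep_iff_exists']
  simp only [restrict_ground_eq, dual_ground]
  constructor
  · rintro ⟨hIE, Bs, hBs, hIBs⟩
    have hBs' : N✶.IsBasis Bs (N.E \ C) := (isBase_restrict_iff diff_subset).mp hBs
    obtain ⟨BC, hBC, hCBC⟩ := hC.exists_isBase_superset
    have hBd : N✶.IsBase (N.E \ BC) := hBC.compl_isBase_dual
    have hBsbase : N✶.IsBase Bs := hBs'.isBase_of_isBase_subset hBd (diff_subset_diff_right hCBC)
    have hNB : N.IsBase (N.E \ Bs) := hBsbase.compl_isBase_of_dual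
    refine ⟨(subset_diff.mp hIE).2, hNB.indep.subset (union_subset ?_ ?_)⟩
    · exact subset_diff.mpr ⟨(subset_diff.mp hIE).1, hIBs⟩
    · exact subset_diff.mpr ⟨hCE, ((subset_diff.mp hBs'.subset).2).symm⟩
  · rintro ⟨hdis, hIC⟩
    have hIE : I ⊆ N.E := (union_subset_iff.mp hIC.subset_ground).1
    obtain ⟨Bn, hBn, hsub⟩ := hIC.exists_isBase_superset
    have hBs : N✶.IsBase (N.E \ Bn) := hBn.compl_isBase_dual
    have hsubX : N.E \ Bn ⊆ N.E \ C :=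
      diff_subset_diff_right ((subset_union_right).trans hsub)
    have hbasis : N✶.IsBasis (N.E \ Bn) (N.E \ C) := hBs.isBasis_of_subset diff_subset hsubX
    refine ⟨subset_diff.mpr ⟨hIE, hdis⟩, N.E \ Bn, (isBase_restrict_iff diff_subset).mpr hbasis, ?_⟩
    exact Set.disjoint_of_subset_left ((subset_union_left).trans hsub) Set.disjoint_sdiff_right

/-- in the Brylawski–Ziegler construction, `M̂ \ A / B = M` and
`M̂ / A \ B = M✶`, where `A = {n+1,…,n+r}` and `B = {n+r+1,…,2n}`. -/
theorem bz_complementary_minors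
    (n r : ℕ) (hrn : r ≤ n) (M M₁ M₂ Mhat : Matroid ℕ)
    (hME : M.E = Set.Icc 1 n) (hMB : M.IsBase (Set.Icc 1 r))
    (hE1 : M₁.E = Set.Icc 1 (2*n)) (hres1 : M₁ ↾ (Set.Icc 1 n) = M)
    (hpar1 : ∀ i ∈ Set.Icc 1 r, MParallel M₁ i (n+i))
    (hloop1 : ∀ i ∈ Set.Icc (r+1) n, MLoop M₁ (n+i))
    (hE2 : M₂.E = Set.Icc 1 (2*n)) (hres2 : M₂ ↾ (Set.Icc 1 n) = M✶)
    (hpar2 : ∀ i ∈ Set.Icc (r+1) n, MParallel M₂ i (n+i))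
    (hloop2 : ∀ i ∈ Set.Icc 1 r, MLoop M₂ (n+i))
    (hEh : Mhat.E = Set.Icc 1 (2*n))
    (hU : ∀ I, Mhat.Indep I ↔ ∃ I₁ I₂, M₁.Indep I₁ ∧ M₂.Indep I₂ ∧ I = I₁ ∪ I₂)
    :
    mcontract (mdelete Mhat (Set.Icc (n+1) (n+r))) (Set.Icc (n+r+1) (2*n)) = M ∧
    mdelete (mcontract Mhat (Set.Icc (n+1) (n+r))) (Set.Icc (n+r+1) (2*n)) = M✶ := by
  classical
  set Aset : Set ℕ := Set.Icc (n+1) (n+r) with hAdef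
  set Bset : Set ℕ := Set.Icc (n+r+1) (2*n) with hBdef
  -- dual base
  have hMBd : M✶.IsBase (Set.Icc (r+1) n) := by
    have h := hMB.compl_isBase_dual
    rwa [hME, show Set.Icc 1 n \ Set.Icc 1 r = Set.Icc (r+1) n from by
      ext x; simp only [Set.mem_diff, Set.mem_Icc, not_and, not_le]; omega] at h
  -- transfers
  have hMto1 : ∀ I : Set ℕ, I ⊆ Set.Icc 1 n → (M.Indep I ↔ M₁.Indep I) := by
    intro I hI
    rw [← hres1, restrict_indep_iff]
    exact ⟨And.left, fun h => ⟨h, hI⟩⟩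
  have hMto2 : ∀ I : Set ℕ, I ⊆ Set.Icc 1 n → (M✶.Indep I ↔ M₂.Indep I) := by
    intro I hI
    rw [← hres2, restrict_indep_iff]
    exact ⟨And.left, fun h => ⟨h, hI⟩⟩
  -- coe facts
  have hIccr : (↑(Finset.Icc 1 r) : Set ℕ) = Set.Icc 1 r := Finset.coe_Icc 1 r
  have hIccrn : (↑(Finset.Icc (r+1) n) : Set ℕ) = Set.Icc (r+1) n := Finset.coe_Icc _ _
  have hA_eq : (↑((Finset.Icc 1 r).image (fun i => n+i)) : Set ℕ) = Aset := by
    ext x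
    simp only [Finset.coe_image, Set.mem_image, Finset.mem_coe, Finset.mem_Icc, hAdef,
      Set.mem_Icc]
    constructor
    · rintro ⟨i, hi, rfl⟩; omega
    · intro hx; exact ⟨x - n, by omega, by omega⟩
  have hB_eq : (↑((Finset.Icc (r+1) n).image (fun i => n+i)) : Set ℕ) = Bset := by
    ext x
    simp only [Finset.coe_image, Set.mem_image, Finset.mem_coe, Finset.mem_Icc, hBdef,
      Set.mem_Icc]
    constructor
    · rintro ⟨i, hi, rfl⟩; omega
    · intro hx; exact ⟨x - n, by omega, by omega⟩
  have hpar1' : ∀ i ∈ Finset.Icc 1 r, MParallel M₁ i (n+i) := by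
    intro i hi; exact hpar1 i (by simpa [Set.mem_Icc] using (Finset.mem_Icc.mp hi))
  have hpar2' : ∀ i ∈ Finset.Icc (r+1) n, MParallel M₂ i (n+i) := by
    intro i hi; exact hpar2 i (by simpa [Set.mem_Icc] using (Finset.mem_Icc.mp hi))
  have hT1 : ∀ i ∈ Finset.Icc 1 r, 1 ≤ i ∧ i ≤ n := by
    intro i hi; have := Finset.mem_Icc.mp hi; omega
  have hT2 : ∀ i ∈ Finset.Icc (r+1) n, 1 ≤ i ∧ i ≤ n := by
    intro i hi; have := Finset.mem_Icc.mp hi; omega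
  -- M₁.Indep Aset
  have hM1r : M₁.Indep (Set.Icc 1 r) :=
    (hMto1 _ (Set.Icc_subset_Icc_right hrn)).mp hMB.indep
  have hM1A : M₁.Indep Aset := by
    have h := (swap_block M₁ n (Finset.Icc 1 r) hpar1' hT1 ∅ (by simp) (by simp)).mp
      (by rwa [Set.empty_union, hIccr])
    rwa [Set.empty_union, hA_eq] at h
  -- M₂.Indep Bset
  have hM2rn : M₂.Indep (Set.Icc (r+1) n) :=
    (hMto2 _ (fun x hx => by simp only [Set.mem_Icc] at *; omega)).mp hMBd.indep
  have hM2B : M₂.Indep Bset := by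
    have h := (swap_block M₂ n (Finset.Icc (r+1) n) hpar2' hT2 ∅ (by simp) (by simp)).mp
      (by rwa [Set.empty_union, hIccrn])
    rwa [Set.empty_union, hB_eq] at h
  have hhatB : Mhat.Indep Bset := (hU _).mpr ⟨∅, Bset, M₁.empty_indep, hM2B,
    (Set.empty_union _).symm⟩
  have hhatA : Mhat.Indep Aset := (hU _).mpr ⟨Aset, ∅, hM1A, M₂.empty_indep,
    (Set.union_empty _).symm⟩
  -- Key 1
  have key1 : ∀ I : Set ℕ, I ⊆ Set.Icc 1 n → (Mhat.Indep (I ∪ Bset) ↔ M.Indep I) := by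
    intro I hI
    constructor
    · intro h
      obtain ⟨I₁, I₂, h1, h2, heq⟩ := (hU _).mp h
      have hI1B : ∀ x ∈ I₁, x ∉ Bset := by
        intro x hx hxB
        rw [hBdef, Set.mem_Icc] at hxB
        have hL := hloop1 (x - n) (by rw [Set.mem_Icc]; omega)
        rw [show n + (x - n) = x from by omega] at hL
        exact hL.2 (h1.subset (Set.singleton_subset_iff.mpr hx))
      have hI1 : I₁ ⊆ I := by
        intro x hx
        have hx' : x ∈ I ∪ Bset := heq ▸ Set.mem_union_left _ hx
        rcases hx' with h' | h'
        · exact h'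
        · exact absurd h' (hI1B x hx)
      have hBI2 : Bset ⊆ I₂ := by
        intro x hx
        have hx' : x ∈ I₁ ∪ I₂ := heq ▸ Set.mem_union_right _ hx
        rcases hx' with h' | h'
        · exact absurd hx (hI1B x h')
        · exact h'
      have hXI2 : I \ I₁ ⊆ I₂ := by
        rintro x ⟨hx1, hx2⟩
        have hx' : x ∈ I₁ ∪ I₂ := heq ▸ Set.mem_union_left _ hx1
        rcases hx' with h' | h'
        · exact absurd h' hx2
        · exact h'
      have hXr : I \ I₁ ⊆ Set.Icc 1 r := by
        rintro x ⟨hx1, hx2⟩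
        have hxn := hI hx1
        rw [Set.mem_Icc] at hxn ⊢
        by_contra hxr
        have hx' : r + 1 ≤ x ∧ x ≤ n := by omega
        have hp := hpar2 x (by rw [Set.mem_Icc]; exact hx')
        apply hp.2.2.2
        apply h2.subset
        intro y hy
        rcases hy with rfl | hy
        · exact hXI2 ⟨hx1, hx2⟩
        · rw [Set.mem_singleton_iff] at hy
          subst hy
          exact hBI2 (by rw [hBdef, Set.mem_Icc]; omega)
      have hXB : M₂.Indep ((I \ I₁) ∪ Bset) := h2.subset (Set.union_subset hXI2 hBI2)
      have hswap := swap_block M₂ n (Finset.Icc (r+1) n) hpar2' hT2 (I \ I₁)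
        (fun x hx => ((Set.mem_Icc.mp (hI hx.1)).2))
        (fun i hi hmem => by
          have h1' := Finset.mem_Icc.mp hi
          have h2' := Set.mem_Icc.mp (hXr hmem)
          omega)
      rw [hIccrn, hB_eq] at hswap
      have hXE : M✶.Indep ((I \ I₁) ∪ Set.Icc (r+1) n) := by
        refine (hMto2 _ ?_).mpr (hswap.mpr hXB)
        apply Set.union_subset
        · exact fun x hx => hI hx.1
        · intro x hx; rw [Set.mem_Icc] at *; omega
      have hXempty : I \ I₁ = ∅ := by
        have heqB := hMBd.eq_of_subset_indep hXE Set.subset_union_right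
        ext x
        simp only [Set.mem_empty_iff_false, iff_false]
        intro hx
        have h1' := Set.mem_Icc.mp (hXr hx)
        have h2' : x ∈ Set.Icc (r+1) n := heqB ▸ Set.mem_union_left _ hx
        rw [Set.mem_Icc] at h2'; omega
      have hII1 : I ⊆ I₁ := by
        intro x hx
        by_contra hc
        exact absurd (Set.mem_empty_iff_false x).mp (by rw [← hXempty]; exact fun h => h ⟨hx, hc⟩)
      exact (hMto1 I hI).mpr (h1.subset hII1)
    · intro h
      exact (hU _).mpr ⟨I, Bset, (hMto1 I hI).mp h, hM2B, rfl⟩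
  -- Key 2
  have key2 : ∀ I : Set ℕ, I ⊆ Set.Icc 1 n → (Mhat.Indep (I ∪ Aset) ↔ M✶.Indep I) := by
    intro I hI
    constructor
    · intro h
      obtain ⟨I₁, I₂, h1, h2, heq⟩ := (hU _).mp h
      have hI2A : ∀ x ∈ I₂, x ∉ Aset := by
        intro x hx hxA
        rw [hAdef, Set.mem_Icc] at hxA
        have hL := hloop2 (x - n) (by rw [Set.mem_Icc]; omega)
        rw [show n + (x - n) = x from by omega] at hL
        exact hL.2 (h2.subset (Set.singleton_subset_iff.mpr hx))
      have hI2 : I₂ ⊆ I := by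
        intro x hx
        have hx' : x ∈ I ∪ Aset := heq ▸ Set.mem_union_right _ hx
        rcases hx' with h' | h'
        · exact h'
        · exact absurd h' (hI2A x hx)
      have hAI1 : Aset ⊆ I₁ := by
        intro x hx
        have hx' : x ∈ I₁ ∪ I₂ := heq ▸ Set.mem_union_right _ hx
        rcases hx' with h' | h'
        · exact h'
        · exact absurd hx (hI2A x h')
      have hXI1 : I \ I₂ ⊆ I₁ := by
        rintro x ⟨hx1, hx2⟩
        have hx' : x ∈ I₁ ∪ I₂ := heq ▸ Set.mem_union_left _ hx1
        rcases hx' with h' | h'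
        · exact h'
        · exact absurd h' hx2
      have hXr : I \ I₂ ⊆ Set.Icc (r+1) n := by
        rintro x ⟨hx1, hx2⟩
        have hxn := hI hx1
        rw [Set.mem_Icc] at hxn ⊢
        by_contra hxr
        have hx' : 1 ≤ x ∧ x ≤ r := by omega
        have hp := hpar1 x (by rw [Set.mem_Icc]; exact hx')
        apply hp.2.2.2
        apply h1.subset
        intro y hy
        rcases hy with rfl | hy
        · exact hXI1 ⟨hx1, hx2⟩
        · rw [Set.mem_singleton_iff] at hy
          subst hy
          exact hAI1 (by rw [hAdef, Set.mem_Icc]; omega)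
      have hXA : M₁.Indep ((I \ I₂) ∪ Aset) := h1.subset (Set.union_subset hXI1 hAI1)
      have hswap := swap_block M₁ n (Finset.Icc 1 r) hpar1' hT1 (I \ I₂)
        (fun x hx => ((Set.mem_Icc.mp (hI hx.1)).2))
        (fun i hi hmem => by
          have h1' := Finset.mem_Icc.mp hi
          have h2' := Set.mem_Icc.mp (hXr hmem)
          omega)
      rw [hIccr, hA_eq] at hswap
      have hXE : M.Indep ((I \ I₂) ∪ Set.Icc 1 r) := by
        refine (hMto1 _ ?_).mpr (hswap.mpr hXA)
        apply Set.union_subset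
        · exact fun x hx => hI hx.1
        · exact Set.Icc_subset_Icc_right hrn
      have hXempty : I \ I₂ = ∅ := by
        have heqB := hMB.eq_of_subset_indep hXE Set.subset_union_right
        ext x
        simp only [Set.mem_empty_iff_false, iff_false]
        intro hx
        have h1' := Set.mem_Icc.mp (hXr hx)
        have h2' : x ∈ Set.Icc 1 r := heqB ▸ Set.mem_union_left _ hx
        rw [Set.mem_Icc] at h2'; omega
      have hII2 : I ⊆ I₂ := by
        intro x hx
        by_contra hc
        exact absurd (Set.mem_empty_iff_false x).mp (by rw [← hXempty]; exact fun h => h ⟨hx, hc⟩)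
      exact (hMto2 I hI).mpr (h2.subset hII2)
    · intro h
      exact (hU _).mpr ⟨Aset, I, hM1A, (hMto2 I hI).mp h, (Set.union_comm _ _) ▸ rfl⟩
  -- assembly
  have hNdel : (mdelete Mhat Aset).E = Mhat.E \ Aset := rfl
  have hNB : (mdelete Mhat Aset).Indep Bset := by
    rw [mdelete, restrict_indep_iff]
    refine ⟨hhatB, ?_⟩
    rw [hEh]
    intro x hx
    rw [hBdef, Set.mem_Icc] at hx
    constructor
    · rw [Set.mem_Icc]; omega
    · rw [hAdef, Set.mem_Icc]; omega
  constructor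
  · refine ext_indep ?_ ?_
    · show (Mhat.E \ Aset) \ Bset = M.E
      rw [hEh, hME]
      ext x
      simp only [Set.mem_diff, Set.mem_Icc, hAdef, hBdef, not_and, not_le]
      omega
    · intro I hIg
      have hIcc : I ⊆ Set.Icc 1 n := by
        intro x hx
        have := hIg hx
        simp only [mcontract, mdelete, dual_ground, restrict_ground_eq, Set.mem_diff, hEh,
          Set.mem_Icc, hAdef, hBdef, not_and, not_le] at this
        rw [Set.mem_Icc]; omega
      rw [mcontract_indep_iff hNB I]
      have hdisB : Disjoint I Bset := by
        rw [Set.disjoint_left]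
        intro x hx hxB
        have h1' := Set.mem_Icc.mp (hIcc hx)
        rw [hBdef, Set.mem_Icc] at hxB; omega
      rw [mdelete, restrict_indep_iff]
      constructor
      · rintro ⟨-, hind, -⟩
        exact (key1 I hIcc).mp hind
      · intro h
        refine ⟨hdisB, (key1 I hIcc).mpr h, ?_⟩
        rw [hEh]
        intro x hx
        rcases hx with hx | hx
        · have := Set.mem_Icc.mp (hIcc hx)
          exact ⟨by rw [Set.mem_Icc]; omega, by rw [hAdef, Set.mem_Icc]; omega⟩
        · rw [hBdef, Set.mem_Icc] at hx
          exact ⟨by rw [Set.mem_Icc]; omega, by rw [hAdef, Set.mem_Icc]; omega⟩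
  · refine ext_indep ?_ ?_
    · show (Mhat.E \ Aset) \ Bset = M✶.E
      rw [hEh, dual_ground, hME]
      ext x
      simp only [Set.mem_diff, Set.mem_Icc, hAdef, hBdef, not_and, not_le]
      omega
    · intro I hIg
      have hIcc : I ⊆ Set.Icc 1 n := by
        intro x hx
        have := hIg hx
        simp only [mcontract, mdelete, dual_ground, restrict_ground_eq, Set.mem_diff, hEh,
          Set.mem_Icc, hAdef, hBdef, not_and, not_le] at this
        rw [Set.mem_Icc]; omega
      rw [mdelete, restrict_indep_iff, mcontract_indep_iff hhatA I]
      have hdisA : Disjoint I Aset := by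
        rw [Set.disjoint_left]
        intro x hx hxA
        have h1' := Set.mem_Icc.mp (hIcc hx)
        rw [hAdef, Set.mem_Icc] at hxA; omega
      constructor
      · rintro ⟨⟨-, hind⟩, -⟩
        exact (key2 I hIcc).mp hind
      · intro h
        refine ⟨⟨hdisA, (key2 I hIcc).mpr h⟩, ?_⟩
        show I ⊆ (Mhat.E \ Aset) \ Bset
        intro x hx
        have h1' := Set.mem_Icc.mp (hIcc hx)
        simp only [Set.mem_diff, Set.mem_Icc, hEh, hAdef, hBdef]
        omega

end NL
end

section
/- With the construction M̂ = M₁ ∨ M₂ as above (where M has rank r on an n-element set E), the matroid M̂ has rank n. -/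
open Set Matroid
namespace NL
variable {γ : Type*}

lemma par_sub {M : Matroid γ} {I : Set γ} {e f : γ} (hI : M.Indep I) (he : e ∈ I) (hf : f ∉ I)
    (hp : MParallel M e f) : M.Indep (insert f (I \ {e})) := by
  obtain ⟨hne, hei, hfi, hd⟩ := hp
  have hI' : M.Indep (I \ {e}) := hI.subset diff_subset
  by_contra h
  have hfE : f ∈ M.E := hfi.subset_ground rfl
  have hfd : f ∉ I \ {e} := fun hx => hf hx.1
  rw [hI'.insert_indep_iff_of_notMem hfd] at h
  have hfc : f ∈ M.closure (I \ {e}) := by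
    by_contra hc; exact h ⟨hfE, hc⟩
  have heE : e ∈ M.E := hei.subset_ground rfl
  have hecf : e ∈ M.closure {f} := by
    have hef : e ∉ ({f} : Set γ) := by simpa using hne
    by_contra hc
    exact hd ((hfi.insert_indep_iff_of_notMem hef).mpr ⟨heE, hc⟩)
  have : M.closure {f} ⊆ M.closure (I \ {e}) :=
    M.closure_subset_closure_of_subset_closure (singleton_subset_iff.mpr hfc)
  exact hI.notMem_closure_diff_of_mem he (this hecf)

lemma shrink {n : ℕ} {N : Matroid ℕ} (hE : N.E = Set.Icc 1 (2*n))
    (hyp : ∀ i ∈ Set.Icc 1 n, MParallel N i (n+i) ∨ MLoop N (n+i)) :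
    ∀ I, N.Indep I → ∃ J, N.Indep J ∧ J ⊆ Set.Icc 1 n ∧ J.ncard = I.ncard := by
  suffices h : ∀ k I, N.Indep I → (I \ Set.Icc 1 n).ncard ≤ k →
      ∃ J, N.Indep J ∧ J ⊆ Set.Icc 1 n ∧ J.ncard = I.ncard by
    intro I hI
    exact h _ I hI le_rfl
  intro k
  induction k with
  | zero =>
    intro I hI h0
    refine ⟨I, hI, ?_, rfl⟩
    have hfin : I.Finite := by
      have hsub := hI.subset_ground
      rw [hE] at hsub
      exact (Set.finite_Icc 1 (2*n)).subset hsub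
    have : (I \ Set.Icc 1 n) = ∅ := by
      rw [← Set.ncard_eq_zero hfin.diff]; omega
    rw [← Set.diff_eq_empty]; exact this
  | succ k ih =>
    intro I hI hle
    have hfin : I.Finite := by
      have hsub := hI.subset_ground
      rw [hE] at hsub
      exact (Set.finite_Icc 1 (2*n)).subset hsub
    by_cases hsub : I ⊆ Set.Icc 1 n
    · exact ⟨I, hI, hsub, rfl⟩
    · obtain ⟨x, hxI, hxn⟩ := not_subset.mp hsub
      have hxE : x ∈ Set.Icc 1 (2*n) := by
        rw [← hE]; exact hI.subset_ground hxI
      simp only [Set.mem_Icc] at hxE hxn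
      set i := x - n with hi
      have hin : i ∈ Set.Icc 1 n := by simp only [Set.mem_Icc]; omega
      have hx : x = n + i := by omega
      rcases hyp i hin with hp | hl
      · rw [← hx] at hp
        have hiI : i ∉ I := by
          intro hiI
          exact hp.2.2.2 (hI.subset (Set.pair_subset hiI hxI))
        have hp' : MParallel N x i := ⟨fun h => hp.1 h.symm, hp.2.2.1, hp.2.1,
          by rw [Set.pair_comm]; exact hp.2.2.2⟩
        have hJ : N.Indep (insert i (I \ {x})) := par_sub hI hxI hiI hp'
        have hkey : (insert i (I \ {x}) \ Set.Icc 1 n) = (I \ Set.Icc 1 n) \ {x} := by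
          ext y
          simp only [Set.mem_diff, Set.mem_insert_iff, Set.mem_singleton_iff, Set.mem_Icc]
          constructor
          · rintro ⟨(rfl | ⟨hyI, hyx⟩), hy⟩
            · exact absurd (Set.mem_Icc.mp hin) hy
            · exact ⟨⟨hyI, hy⟩, hyx⟩
          · rintro ⟨⟨hyI, hy⟩, hyx⟩
            exact ⟨Or.inr ⟨hyI, hyx⟩, hy⟩
        have hcard : ((insert i (I \ {x})) \ Set.Icc 1 n).ncard ≤ k := by
          rw [hkey]
          have hxd : x ∈ I \ Set.Icc 1 n := ⟨hxI, by simp only [Set.mem_Icc]; omega⟩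
          have h1 : ((I \ Set.Icc 1 n) \ {x}).ncard = (I \ Set.Icc 1 n).ncard - 1 :=
            Set.ncard_diff_singleton_of_mem hxd
          omega
        obtain ⟨J, hJi, hJs, hJc⟩ := ih _ hJ hcard
        refine ⟨J, hJi, hJs, ?_⟩
        rw [hJc]
        have hiI' : i ∉ I \ {x} := fun h => hiI h.1
        rw [Set.ncard_insert_of_notMem hiI' hfin.diff,
          Set.ncard_diff_singleton_add_one hxI hfin]
      · exfalso
        apply hl.2
        rw [← hx]
        exact hI.subset (Set.singleton_subset_iff.mpr hxI)

lemma icc_ncard (a b : ℕ) : (Set.Icc a b).ncard = b + 1 - a := by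
  rw [← Finset.coe_Icc, Set.ncard_coe_finset, Nat.card_Icc]

lemma indep_card_le_base {N : Matroid ℕ} {B I : Set ℕ} (hB : N.IsBase B) (hBfin : B.Finite)
    (hI : N.Indep I) : I.ncard ≤ B.ncard := by
  obtain ⟨B', hB', hIB'⟩ := hI.exists_isBase_superset
  have hB'fin : B'.Finite := hB.finite_of_finite hBfin hB'
  calc I.ncard ≤ B'.ncard := Set.ncard_le_ncard hIB' hB'fin
    _ = B.ncard := hB'.ncard_eq_ncard_of_isBase hB


/-- the Brylawski–Ziegler union `M̂ = M₁ ∨ M₂` has rank `n`. -/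
theorem bz_union_rank
    (n r : ℕ) (hrn : r ≤ n) (M M₁ M₂ Mhat : Matroid ℕ)
    (hME : M.E = Set.Icc 1 n) (hMB : M.IsBase (Set.Icc 1 r))
    (hE1 : M₁.E = Set.Icc 1 (2*n)) (hres1 : M₁ ↾ (Set.Icc 1 n) = M)
    (hpar1 : ∀ i ∈ Set.Icc 1 r, MParallel M₁ i (n+i))
    (hloop1 : ∀ i ∈ Set.Icc (r+1) n, MLoop M₁ (n+i))
    (hE2 : M₂.E = Set.Icc 1 (2*n)) (hres2 : M₂ ↾ (Set.Icc 1 n) = M✶)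
    (hpar2 : ∀ i ∈ Set.Icc (r+1) n, MParallel M₂ i (n+i))
    (hloop2 : ∀ i ∈ Set.Icc 1 r, MLoop M₂ (n+i))
    (hEh : Mhat.E = Set.Icc 1 (2*n))
    (hU : ∀ I, Mhat.Indep I ↔ ∃ I₁ I₂, M₁.Indep I₁ ∧ M₂.Indep I₂ ∧ I = I₁ ∪ I₂)
    :
    rk Mhat Mhat.E = n := by
  -- the dual base
  have hMB' : M✶.IsBase (Set.Icc (r+1) n) := by
    have h := hMB.compl_isBase_dual
    rw [hME] at h
    have heq : Set.Icc 1 n \ Set.Icc 1 r = Set.Icc (r+1) n := by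
      ext y; simp only [Set.mem_diff, Set.mem_Icc]; omega
    rwa [heq] at h
  -- the combined parallel/loop hypotheses
  have hyp1 : ∀ i ∈ Set.Icc 1 n, MParallel M₁ i (n+i) ∨ MLoop M₁ (n+i) := by
    intro i hi
    simp only [Set.mem_Icc] at hi
    by_cases h : i ≤ r
    · exact Or.inl (hpar1 i (by simp only [Set.mem_Icc]; omega))
    · exact Or.inr (hloop1 i (by simp only [Set.mem_Icc]; omega))
  have hyp2 : ∀ i ∈ Set.Icc 1 n, MParallel M₂ i (n+i) ∨ MLoop M₂ (n+i) := by
    intro i hi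
    simp only [Set.mem_Icc] at hi
    by_cases h : i ≤ r
    · exact Or.inr (hloop2 i (by simp only [Set.mem_Icc]; omega))
    · exact Or.inl (hpar2 i (by simp only [Set.mem_Icc]; omega))
  -- upper bound : every Mhat-independent set has at most n elements
  have hub : ∀ k ∈ {m | ∃ I, Mhat.Indep I ∧ I ⊆ Mhat.E ∧ I.ncard = m}, k ≤ n := by
    rintro k ⟨I, hI, hIE, rfl⟩
    obtain ⟨I₁, I₂, h1, h2, rfl⟩ := (hU I).mp hI
    obtain ⟨J₁, hJ1i, hJ1s, hJ1c⟩ := shrink hE1 hyp1 I₁ h1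
    obtain ⟨J₂, hJ2i, hJ2s, hJ2c⟩ := shrink hE2 hyp2 I₂ h2
    have hMJ1 : M.Indep J₁ := by
      rw [← hres1]; exact restrict_indep_iff.mpr ⟨hJ1i, hJ1s⟩
    have hMJ2 : M✶.Indep J₂ := by
      rw [← hres2]; exact restrict_indep_iff.mpr ⟨hJ2i, hJ2s⟩
    have hb1 : J₁.ncard ≤ r := by
      have := indep_card_le_base hMB (Set.finite_Icc 1 r) hMJ1
      rwa [icc_ncard] at this
    have hb2 : J₂.ncard ≤ n - r := by
      have := indep_card_le_base hMB' (Set.finite_Icc (r+1) n) hMJ2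
      rw [icc_ncard] at this
      omega
    have : (I₁ ∪ I₂).ncard ≤ I₁.ncard + I₂.ncard := Set.ncard_union_le I₁ I₂
    omega
  -- lower bound : Icc 1 n is Mhat-independent
  have hIndep : Mhat.Indep (Set.Icc 1 n) := by
    rw [hU]
    refine ⟨Set.Icc 1 r, Set.Icc (r+1) n, ?_, ?_, ?_⟩
    · have h := hMB.indep
      rw [← hres1] at h
      exact h.of_restrict
    · have h := hMB'.indep
      rw [← hres2] at h
      exact h.of_restrict
    · ext y; simp only [Set.mem_Icc, Set.mem_union]; omega
  have hmem : n ∈ {m | ∃ I, Mhat.Indep I ∧ I ⊆ Mhat.E ∧ I.ncard = m} := by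
    refine ⟨Set.Icc 1 n, hIndep, ?_, ?_⟩
    · rw [hEh]; intro y hy; simp only [Set.mem_Icc] at *; omega
    · rw [icc_ncard]; omega
  -- conclude
  unfold rk
  apply le_antisymm
  · exact csSup_le ⟨n, hmem⟩ hub
  · exact le_csSup ⟨n, hub⟩ hmem

end NL
end

section
/- Let M̂ be the matroid union constructed from a rank-r matroid M on E ({1,…,r} a basis) with auxiliary parallel/loop sets A and B as in the Brylawski–Ziegler construction. Let X be a cocircuit of M̂ with X ∩ B = ∅. Then for every a ∈ A and e ∈ {1,…,r} with a parallel to e in M₁: a ∈ X if and only if e ∈ X. -/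
open Set Matroid
namespace NL
variable {γ : Type*}

lemma mparallel_symm {M : Matroid γ} {e f : γ} (h : MParallel M e f) : MParallel M f e :=
  ⟨h.1.symm, h.2.2.1, h.2.1, by rw [Set.pair_comm]; exact h.2.2.2⟩

lemma mem_closure_of_parallel {M : Matroid γ} {e f : γ} (h : MParallel M e f) :
    f ∈ M.closure {e} := by
  rw [h.2.1.mem_closure_iff]
  left
  refine ⟨?_, ?_⟩
  · rw [Set.pair_comm]
    exact h.2.2.2
  · exact insert_subset (h.2.2.1.subset_ground rfl) (h.2.1.subset_ground)

lemma parallel_exchange {M : Matroid γ} {e f : γ} (h : MParallel M e f)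
    {I : Set γ} (hI : M.Indep I) (hf : f ∈ I) (he : e ∉ I) :
    M.Indep (insert e (I \ {f})) := by
  by_contra hdep
  have hJ : M.Indep (I \ {f}) := hI.subset diff_subset
  have heE : e ∈ M.E := h.2.1.subset_ground rfl
  have hecl : e ∈ M.closure (I \ {f}) := by
    rw [hJ.mem_closure_iff]
    left
    exact ⟨hdep, insert_subset heE (hJ.subset_ground)⟩
  have hfcl : f ∈ M.closure (I \ {f}) := by
    have h1 : M.closure {e} ⊆ M.closure (I \ {f}) :=
      M.closure_subset_closure_of_subset_closure (by simpa using hecl)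
    exact h1 (mem_closure_of_parallel h)
  exact hI.notMem_closure_sdiff_of_mem hf hfcl

lemma exists_swap {M : Matroid γ} {I S : Set γ} {x : γ} (hI : M.Indep I) (hx : x ∈ I)
    (hS : S ⊆ M.E) (hxcl : x ∈ M.closure S) (hxS : x ∉ S) :
    ∃ b ∈ S, b ∉ I ∧ M.Indep (insert b (I \ {x})) := by
  by_contra hcon
  push_neg at hcon
  have hJ : M.Indep (I \ {x}) := hI.subset diff_subset
  have hScl : S ⊆ M.closure (I \ {x}) := by
    intro b hb
    by_cases hbI : b ∈ I
    · exact M.subset_closure _ hJ.subset_ground ⟨hbI, fun hbx => hxS (hbx ▸ hb)⟩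
    · rw [hJ.mem_closure_iff]
      left
      exact ⟨hcon b hb hbI, insert_subset (hS hb) hJ.subset_ground⟩
  have : x ∈ M.closure (I \ {x}) :=
    M.closure_subset_closure_of_subset_closure hScl hxcl
  exact hI.notMem_closure_sdiff_of_mem hx this

/-- if `X` is a cocircuit of `M̂` with `X ∩ B = ∅`, then `X`
contains an element of `A` iff it contains its parallel partner in `{1,…,r}`. -/
theorem bz_cocircuit_parallel
    (n r : ℕ) (hrn : r ≤ n) (M M₁ M₂ Mhat : Matroid ℕ)
    (hME : M.E = Set.Icc 1 n) (hMB : M.IsBase (Set.Icc 1 r))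
    (hE1 : M₁.E = Set.Icc 1 (2*n)) (hres1 : M₁ ↾ (Set.Icc 1 n) = M)
    (hpar1 : ∀ i ∈ Set.Icc 1 r, MParallel M₁ i (n+i))
    (hloop1 : ∀ i ∈ Set.Icc (r+1) n, MLoop M₁ (n+i))
    (hE2 : M₂.E = Set.Icc 1 (2*n)) (hres2 : M₂ ↾ (Set.Icc 1 n) = M✶)
    (hpar2 : ∀ i ∈ Set.Icc (r+1) n, MParallel M₂ i (n+i))
    (hloop2 : ∀ i ∈ Set.Icc 1 r, MLoop M₂ (n+i))
    (hEh : Mhat.E = Set.Icc 1 (2*n))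
    (hU : ∀ I, Mhat.Indep I ↔ ∃ I₁ I₂, M₁.Indep I₁ ∧ M₂.Indep I₂ ∧ I = I₁ ∪ I₂)
    (X : Set ℕ) (hX : Cocircuit Mhat X) (hXB : X ∩ Set.Icc (n+r+1) (2*n) = ∅) :
    ∀ i ∈ Set.Icc 1 r, ((n+i) ∈ X ↔ i ∈ X) := by
  intro i hi
  rw [Set.mem_Icc] at hi
  obtain ⟨hi1, hir⟩ := hi
  have hin : i ≤ n := le_trans hir hrn
  have hn1 : 1 ≤ n := le_trans hi1 hin
  obtain ⟨hXE, hmeet, hmin⟩ := hX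
  have hpari : MParallel M₁ i (n+i) := hpar1 i (Set.mem_Icc.mpr ⟨hi1, hir⟩)
  have hloopi : MLoop M₂ (n+i) := hloop2 i (Set.mem_Icc.mpr ⟨hi1, hir⟩)
  have hini : i ≠ n + i := by omega
  -- the set B of parallel copies of the dual basis
  set Bset := Set.Icc (n+r+1) (2*n) with hBset
  have hBsetE : Bset ⊆ M₂.E := by
    rw [hE2]; intro x hx; rw [Set.mem_Icc] at *; omega
  have hiBset : i ∉ Bset := by rw [hBset, Set.mem_Icc]; omega
  have hniBset : (n+i) ∉ Bset := by rw [hBset, Set.mem_Icc]; omega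
  -- E₂ is a base of M✶
  have hE2base : M✶.IsBase (Set.Icc (r+1) n) := by
    have h1 := hMB.compl_isBase_dual
    have hq : M.E \ Set.Icc 1 r = Set.Icc (r+1) n := by
      rw [hME]; ext x; simp only [Set.mem_diff, Set.mem_Icc]; omega
    rwa [hq] at h1
  have hE2indep : M₂.Indep (Set.Icc (r+1) n) := by
    have h1 := hE2base.indep
    rw [← hres2] at h1
    exact (Matroid.restrict_indep_iff.1 h1).1
  -- i is in the M₂-closure of E₂
  have hiE2 : i ∉ Set.Icc (r+1) n := by rw [Set.mem_Icc]; omega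
  have hdepins : M₂.Dep (insert i (Set.Icc (r+1) n)) := by
    constructor
    · intro hind
      have hsub : insert i (Set.Icc (r+1) n) ⊆ Set.Icc 1 n := by
        intro x hx
        rcases hx with rfl | hx
        · rw [Set.mem_Icc]; omega
        · rw [Set.mem_Icc] at *; omega
      have h2 : (M₂ ↾ Set.Icc 1 n).Indep (insert i (Set.Icc (r+1) n)) :=
        Matroid.restrict_indep_iff.2 ⟨hind, hsub⟩
      rw [hres2] at h2
      have heq := hE2base.eq_of_subset_indep h2 (subset_insert _ _)
      exact hiE2 (heq ▸ mem_insert i _)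
    · intro x hx
      rcases hx with rfl | hx
      · rw [hE2, Set.mem_Icc]; omega
      · rw [Set.mem_Icc] at hx; rw [hE2, Set.mem_Icc]; omega
  have hicl2 : i ∈ M₂.closure (Set.Icc (r+1) n) :=
    (hE2indep.mem_closure_iff).2 (Or.inl hdepins)
  -- E₂ ⊆ closure of Bset, hence i ∈ closure of Bset
  have hE2cl : Set.Icc (r+1) n ⊆ M₂.closure Bset := by
    intro j hj
    have hpj := mparallel_symm (hpar2 j hj)
    have hjcl : j ∈ M₂.closure {n+j} := mem_closure_of_parallel hpj
    have hsub : ({n+j} : Set ℕ) ⊆ Bset := by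
      rw [Set.mem_Icc] at hj
      intro x hx
      rw [Set.mem_singleton_iff] at hx
      rw [hBset, Set.mem_Icc]; omega
    exact M₂.closure_subset_closure hsub hjcl
  have hiclB : i ∈ M₂.closure Bset :=
    M₂.closure_subset_closure_of_subset_closure hE2cl hicl2
  -- elements of Bset are loops of M₁
  have hBloop1 : ∀ b ∈ Bset, ∀ I : Set ℕ, M₁.Indep I → b ∉ I := by
    intro b hb I hI hbI
    rw [hBset, Set.mem_Icc] at hb
    have hl := hloop1 (b - n) (by rw [Set.mem_Icc]; omega)
    have hb' : n + (b - n) = b := by omega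
    rw [hb'] at hl
    exact hl.2 (hI.subset (singleton_subset_iff.2 hbI))
  -- from minimality: a base avoiding X\{x} but containing x
  have getBase : ∀ x ∈ X, ∃ Bh, Mhat.IsBase Bh ∧ (X \ {x}) ∩ Bh = ∅ ∧ x ∈ Bh := by
    intro x hx
    obtain ⟨Bh, hBh, hdisj⟩ := hmin (X \ {x}) (Set.sdiff_singleton_ssubset.mpr hx)
    refine ⟨Bh, hBh, hdisj, ?_⟩
    obtain ⟨y, hyX, hyB⟩ := hmeet Bh hBh
    by_cases hyx : y = x
    · exact hyx ▸ hyB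
    · have : y ∈ (X \ {x}) ∩ Bh := ⟨⟨hyX, hyx⟩, hyB⟩
      rw [hdisj] at this
      exact this.elim
  constructor
  · -- n+i ∈ X → i ∈ X
    intro hniX
    by_contra hiX
    obtain ⟨Bh, hBh, hdisj, hniBh⟩ := getBase (n+i) hniX
    obtain ⟨I₁, I₂, hI1, hI2, hBeq⟩ := (hU Bh).1 hBh.indep
    subst hBeq
    have hniI2 : (n+i) ∉ I₂ := fun h => hloopi.2 (hI2.subset (singleton_subset_iff.2 h))
    have hniI1 : (n+i) ∈ I₁ := by
      rcases hniBh with h | h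
      · exact h
      · exact absurd h hniI2
    have hiI1 : i ∉ I₁ := by
      intro h
      exact hpari.2.2.2 (hI1.subset (by
        intro x hx
        rcases hx with rfl | hx
        · exact h
        · rw [Set.mem_singleton_iff] at hx; exact hx ▸ hniI1))
    -- the contradiction machine: a base Bh' missing X
    have contra : ∀ Bh' : Set ℕ, Mhat.IsBase Bh' →
        Bh' ⊆ insert i (Bset ∪ ((I₁ ∪ I₂) \ {n+i})) → False := by
      intro Bh' hBh' hsub
      obtain ⟨x, hxX, hxB'⟩ := hmeet Bh' hBh'
      rcases hsub hxB' with rfl | hx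
      · exact hiX hxX
      rcases hx with hx | hx
      · have : x ∈ X ∩ Bset := ⟨hxX, hx⟩
        rw [hXB] at this
        exact this.elim
      · have : x ∈ (X \ {n+i}) ∩ (I₁ ∪ I₂) := ⟨⟨hxX, hx.2⟩, hx.1⟩
        rw [hdisj] at this
        exact this.elim
    by_cases hiI2 : i ∈ I₂
    · -- swap i out of I₂ for some b ∈ Bset; swap i into I₁ for n+i
      obtain ⟨b, hbB, hbI2, hbind⟩ := exists_swap hI2 hiI2 hBsetE hiclB hiBset
      have hbI1 : b ∉ I₁ := hBloop1 b hbB I₁ hI1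
      have hbBh : b ∉ I₁ ∪ I₂ := by rintro (h | h); exacts [hbI1 h, hbI2 h]
      have hbi : b ≠ i := fun h => hiBset (h ▸ hbB)
      have hbni : b ≠ n + i := fun h => hniBset (h ▸ hbB)
      have hind1 : M₁.Indep (insert i (I₁ \ {n+i})) := parallel_exchange hpari hI1 hniI1 hiI1
      have hseteq : insert b ((I₁ ∪ I₂) \ {n+i}) =
          insert i (I₁ \ {n+i}) ∪ insert b (I₂ \ {i}) := by
        ext x
        simp only [Set.mem_insert_iff, Set.mem_union, Set.mem_diff, Set.mem_singleton_iff]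
        constructor
        · rintro (rfl | ⟨(h | h), hne⟩)
          · exact Or.inr (Or.inl rfl)
          · exact Or.inl (Or.inr ⟨h, hne⟩)
          · by_cases hxi : x = i
            · exact Or.inl (Or.inl hxi)
            · exact Or.inr (Or.inr ⟨h, hxi⟩)
        · rintro ((rfl | ⟨h, hne⟩) | (rfl | ⟨h, hne⟩))
          · exact Or.inr ⟨Or.inr hiI2, hini⟩
          · exact Or.inr ⟨Or.inl h, hne⟩
          · exact Or.inl rfl
          · exact Or.inr ⟨Or.inr h, fun hq => hniI2 (hq ▸ h)⟩
      have hBh' : Mhat.IsBase (insert b ((I₁ ∪ I₂) \ {n+i})) := by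
        apply hBh.exchange_isBase_of_indep hbBh
        rw [hU, hseteq]
        exact ⟨_, _, hind1, hbind, rfl⟩
      apply contra _ hBh'
      intro x hx
      rcases hx with rfl | hx
      · exact Or.inr (Or.inl hbB)
      · exact Or.inr (Or.inr hx)
    · -- i ∉ Bh: swap n+i for i directly
      have hiBh : i ∉ I₁ ∪ I₂ := by rintro (h | h); exacts [hiI1 h, hiI2 h]
      have hind1 : M₁.Indep (insert i (I₁ \ {n+i})) := parallel_exchange hpari hI1 hniI1 hiI1
      have hseteq : insert i ((I₁ ∪ I₂) \ {n+i}) = insert i (I₁ \ {n+i}) ∪ I₂ := by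
        rw [union_diff_distrib, diff_singleton_eq_self hniI2, Set.insert_union]
      have hBh' : Mhat.IsBase (insert i ((I₁ ∪ I₂) \ {n+i})) := by
        apply hBh.exchange_isBase_of_indep hiBh
        rw [hU, hseteq]
        exact ⟨_, _, hind1, hI2, rfl⟩
      apply contra _ hBh'
      intro x hx
      rcases hx with rfl | hx
      · exact Or.inl rfl
      · exact Or.inr (Or.inr hx)
  · -- i ∈ X → n+i ∈ X
    intro hiX
    by_contra hniX
    obtain ⟨Bh, hBh, hdisj, hiBh⟩ := getBase i hiX
    obtain ⟨I₁, I₂, hI1, hI2, hBeq⟩ := (hU Bh).1 hBh.indep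
    subst hBeq
    have hniI2 : (n+i) ∉ I₂ := fun h => hloopi.2 (hI2.subset (singleton_subset_iff.2 h))
    have contra : ∀ Bh' : Set ℕ, Mhat.IsBase Bh' →
        Bh' ⊆ insert (n+i) (Bset ∪ ((I₁ ∪ I₂) \ {i})) → False := by
      intro Bh' hBh' hsub
      obtain ⟨x, hxX, hxB'⟩ := hmeet Bh' hBh'
      rcases hsub hxB' with rfl | hx
      · exact hniX hxX
      rcases hx with hx | hx
      · have : x ∈ X ∩ Bset := ⟨hxX, hx⟩
        rw [hXB] at this
        exact this.elim
      · have : x ∈ (X \ {i}) ∩ (I₁ ∪ I₂) := ⟨⟨hxX, hx.2⟩, hx.1⟩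
        rw [hdisj] at this
        exact this.elim
    by_cases hiI1 : i ∈ I₁
    · -- swap i for n+i in I₁
      have hniI1 : (n+i) ∉ I₁ := by
        intro h
        exact hpari.2.2.2 (hI1.subset (by
          intro x hx
          rcases hx with rfl | hx
          · exact hiI1
          · rw [Set.mem_singleton_iff] at hx; exact hx ▸ h))
      have hniBh : (n+i) ∉ I₁ ∪ I₂ := by rintro (h | h); exacts [hniI1 h, hniI2 h]
      have hind1 : M₁.Indep (insert (n+i) (I₁ \ {i})) :=
        parallel_exchange (mparallel_symm hpari) hI1 hiI1 hniI1
      have hseteq : insert (n+i) ((I₁ ∪ I₂) \ {i}) =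
          insert (n+i) (I₁ \ {i}) ∪ (I₂ \ {i}) := by
        rw [union_diff_distrib, Set.insert_union]
      have hBh' : Mhat.IsBase (insert (n+i) ((I₁ ∪ I₂) \ {i})) := by
        apply hBh.exchange_isBase_of_indep hniBh
        rw [hU, hseteq]
        exact ⟨_, _, hind1, hI2.subset diff_subset, rfl⟩
      apply contra _ hBh'
      intro x hx
      rcases hx with rfl | hx
      · exact Or.inl rfl
      · exact Or.inr (Or.inr hx)
    · -- i ∈ I₂: swap i out for b ∈ Bset
      have hiI2 : i ∈ I₂ := by
        rcases hiBh with h | h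
        · exact absurd h hiI1
        · exact h
      obtain ⟨b, hbB, hbI2, hbind⟩ := exists_swap hI2 hiI2 hBsetE hiclB hiBset
      have hbI1 : b ∉ I₁ := hBloop1 b hbB I₁ hI1
      have hbBh : b ∉ I₁ ∪ I₂ := by rintro (h | h); exacts [hbI1 h, hbI2 h]
      have hseteq : insert b ((I₁ ∪ I₂) \ {i}) = I₁ ∪ insert b (I₂ \ {i}) := by
        rw [union_diff_distrib, diff_singleton_eq_self hiI1, Set.union_insert]
      have hBh' : Mhat.IsBase (insert b ((I₁ ∪ I₂) \ {i})) := by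
        apply hBh.exchange_isBase_of_indep hbBh
        rw [hU, hseteq]
        exact ⟨_, _, hI1, hbind, rfl⟩
      apply contra _ hBh'
      intro x hx
      rcases hx with rfl | hx
      · exact Or.inr (Or.inl hbB)
      · exact Or.inr (Or.inr hx)

end NL
end

section
/- Let M̂ be the Brylawski–Ziegler matroid union constructed from a rank-r matroid M on E with basis {1,…,r} and auxiliary sets A, B. If X is a cocircuit of M̂ with X ∩ B = ∅, then X ∩ E is a cocircuit of M. -/
open Set Matroid
namespace NL
variable {γ : Type*}

lemma MParallel.symm {N : Matroid γ} {e f : γ} (h : MParallel N e f) : MParallel N f e := by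
  obtain ⟨h1, h2, h3, h4⟩ := h
  exact ⟨h1.symm, h3, h2, by rwa [Set.pair_comm]⟩

lemma parallel_swap {N : Matroid γ} {e f : γ} (h : MParallel N e f) {I : Set γ}
    (hI : N.Indep I) (he : e ∈ I) (hf : f ∉ I) : N.Indep (insert f (I \ {e})) := by
  obtain ⟨hne, hee, hff, hdep⟩ := h
  have heE : e ∈ N.E := hee.subset_ground rfl
  have hfE : f ∈ N.E := hff.subset_ground rfl
  have hecl : e ∈ N.closure {f} := by
    by_contra hc
    rw [hff.notMem_closure_iff_of_notMem (by simp [hne]) heE] at hc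
    exact hdep hc
  have hJ : N.Indep (I \ {e}) := hI.subset diff_subset
  rw [hJ.insert_indep_iff_of_notMem (fun hfI => hf hfI.1)]
  refine ⟨hfE, fun hfJ => ?_⟩
  have hsub : N.closure {f} ⊆ N.closure (I \ {e}) := by
    have h1 := N.closure_subset_closure (show {f} ⊆ N.closure (I \ {e}) by simpa)
    rwa [closure_closure] at h1
  have heJ : e ∈ N.closure (I \ {e}) := hsub hecl
  have hIe : N.Indep (insert e (I \ {e})) := by
    rwa [insert_diff_singleton, insert_eq_of_mem he]
  rw [hJ.insert_indep_iff_of_notMem (by simp)] at hIe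
  exact hIe.2 heJ

lemma proj_indep {N : Matroid ℕ} {n : ℕ} {S : Set ℕ} (hS : S ⊆ Set.Icc 1 n)
    (hp : ∀ i ∈ S, MParallel N i (n+i)) :
    ∀ (k : ℕ) (I : Set ℕ), I.Finite → (I \ Set.Icc 1 n).ncard ≤ k →
      N.Indep I → I ⊆ Set.Icc 1 n ∪ (fun i => n+i) '' S →
      ∃ J, N.Indep J ∧ J ⊆ Set.Icc 1 n ∧ J.encard = I.encard ∧
        ∀ x ∈ J, x ∈ I ∨ n + x ∈ I := by
  intro k
  induction k with
  | zero =>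
    intro I hfin hcard hI hsub
    have hIE : I ⊆ Set.Icc 1 n := by
      have h0 : (I \ Set.Icc 1 n) = ∅ := by
        rw [← Set.ncard_eq_zero hfin.diff]; omega
      exact diff_eq_empty.mp h0
    exact ⟨I, hI, hIE, rfl, fun x hx => Or.inl hx⟩
  | succ k ih =>
    intro I hfin hcard hI hsub
    by_cases hIE : I ⊆ Set.Icc 1 n
    · exact ⟨I, hI, hIE, rfl, fun x hx => Or.inl hx⟩
    obtain ⟨a, haI, han⟩ : ∃ a ∈ I, a ∉ Set.Icc 1 n := not_subset.mp hIE
    obtain ⟨i, hiS, hia⟩ : ∃ i ∈ S, n + i = a := by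
      rcases hsub haI with h | ⟨i, hiS, hia⟩
      · exact absurd h han
      · exact ⟨i, hiS, hia⟩
    have hiI : i ∉ I := by
      intro hiI
      have hpair : N.Indep {i, n+i} := hI.subset (by
        rw [Set.insert_subset_iff, Set.singleton_subset_iff, hia]
        exact ⟨hiI, haI⟩)
      exact (hp i hiS).2.2.2 hpair
    have hI'indep : N.Indep (insert i (I \ {a})) := by
      rw [← hia]
      exact parallel_swap (hp i hiS).symm hI (by rwa [hia]) hiI
    have hiIcc : i ∈ Set.Icc 1 n := hS hiS
    have hfin' : (insert i (I \ {a})).Finite := hfin.diff.insert _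
    have hcard' : ((insert i (I \ {a})) \ Set.Icc 1 n).ncard ≤ k := by
      have heq : (insert i (I \ {a})) \ Set.Icc 1 n = (I \ Set.Icc 1 n) \ {a} := by
        ext x
        simp only [Set.mem_insert_iff, Set.mem_diff, Set.mem_singleton_iff]
        constructor
        · rintro ⟨(rfl | ⟨hxI, hxa⟩), hxn⟩
          · exact absurd hiIcc hxn
          · exact ⟨⟨hxI, hxn⟩, hxa⟩
        · rintro ⟨⟨hxI, hxn⟩, hxa⟩
          exact ⟨Or.inr ⟨hxI, hxa⟩, hxn⟩
      rw [heq]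
      have hmem : a ∈ I \ Set.Icc 1 n := ⟨haI, han⟩
      have hlt := Set.ncard_diff_singleton_lt_of_mem hmem hfin.diff
      omega
    have hsub' : (insert i (I \ {a})) ⊆ Set.Icc 1 n ∪ (fun i => n+i) '' S :=
      insert_subset (Or.inl hiIcc) (diff_subset.trans hsub)
    obtain ⟨J, hJ, hJE, hJcard, hJprop⟩ := ih (insert i (I \ {a})) hfin' hcard' hI'indep hsub'
    refine ⟨J, hJ, hJE, ?_, ?_⟩
    · rw [hJcard, Set.encard_insert_of_notMem (fun h => hiI h.1),
        Set.encard_diff_singleton_add_one haI]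
    · intro x hx
      rcases hJprop x hx with hxI' | hnxI'
      · rcases Set.mem_insert_iff.mp hxI' with rfl | ⟨hxI, _⟩
        · exact Or.inr (by rwa [hia])
        · exact Or.inl hxI
      · rcases Set.mem_insert_iff.mp hnxI' with heq | ⟨hxI, _⟩
        · have hxIcc := hJE hx
          simp only [Set.mem_Icc] at hxIcc hiIcc
          omega
        · exact Or.inr hxI


/-- if `X` is a cocircuit of `M̂` with `X ∩ B = ∅`, then
`X ∩ E` is a cocircuit of `M`. -/
theorem bz_cocircuit_restricts
    (n r : ℕ) (hrn : r ≤ n) (M M₁ M₂ Mhat : Matroid ℕ)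
    (hME : M.E = Set.Icc 1 n) (hMB : M.IsBase (Set.Icc 1 r))
    (hE1 : M₁.E = Set.Icc 1 (2*n)) (hres1 : M₁ ↾ (Set.Icc 1 n) = M)
    (hpar1 : ∀ i ∈ Set.Icc 1 r, MParallel M₁ i (n+i))
    (hloop1 : ∀ i ∈ Set.Icc (r+1) n, MLoop M₁ (n+i))
    (hE2 : M₂.E = Set.Icc 1 (2*n)) (hres2 : M₂ ↾ (Set.Icc 1 n) = M✶)
    (hpar2 : ∀ i ∈ Set.Icc (r+1) n, MParallel M₂ i (n+i))
    (hloop2 : ∀ i ∈ Set.Icc 1 r, MLoop M₂ (n+i))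
    (hEh : Mhat.E = Set.Icc 1 (2*n))
    (hU : ∀ I, Mhat.Indep I ↔ ∃ I₁ I₂, M₁.Indep I₁ ∧ M₂.Indep I₂ ∧ I = I₁ ∪ I₂)
    (X : Set ℕ) (hX : Cocircuit Mhat X) (hXB : X ∩ Set.Icc (n+r+1) (2*n) = ∅) :
    Cocircuit M (X ∩ Set.Icc 1 n) := by
  -- basic finiteness
  have hMfin : M.E.Finite := by rw [hME]; exact Set.finite_Icc _ _
  have hfin1 : M₁.E.Finite := by rw [hE1]; exact Set.finite_Icc _ _
  have hfin2 : M₂.E.Finite := by rw [hE2]; exact Set.finite_Icc _ _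
  have hhatfin : Mhat.E.Finite := by rw [hEh]; exact Set.finite_Icc _ _
  have hIccCard : ∀ a b : ℕ, (Set.Icc a b).encard = ((b + 1 - a : ℕ) : ℕ∞) := by
    intro a b
    rw [← Finset.coe_Icc, Set.encard_coe_eq_coe_finsetCard, Nat.card_Icc]
  -- moves between M and M₁ / M✶ and M₂
  have hM1ofM : ∀ I, M.Indep I → M₁.Indep I := by
    intro I hI
    have h' : (M₁ ↾ Set.Icc 1 n).Indep I := by rw [hres1]; exact hI
    exact (restrict_indep_iff.mp h').1
  have hMofM1 : ∀ I, M₁.Indep I → I ⊆ Set.Icc 1 n → M.Indep I := by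
    intro I h1 h2; rw [← hres1]; exact restrict_indep_iff.mpr ⟨h1, h2⟩
  have hM2ofMd : ∀ I, M✶.Indep I → M₂.Indep I := by
    intro I hI
    have h' : (M₂ ↾ Set.Icc 1 n).Indep I := by rw [hres2]; exact hI
    exact (restrict_indep_iff.mp h').1
  have hMdofM2 : ∀ I, M₂.Indep I → I ⊆ Set.Icc 1 n → M✶.Indep I := by
    intro I h1 h2; rw [← hres2]; exact restrict_indep_iff.mpr ⟨h1, h2⟩
  -- cardinalities of bases of M and M✶
  have hMbaseCard : ∀ Bb, M.IsBase Bb → Bb.encard = (r : ℕ∞) := by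
    intro Bb hBb
    rw [hBb.encard_eq_encard_of_isBase hMB, hIccCard]
    exact congrArg _ (by omega)
  have hMindepCard : ∀ I, M.Indep I → I.encard ≤ (r : ℕ∞) := by
    intro I hI
    obtain ⟨Bb, hBb, hIBb⟩ := hI.exists_isBase_superset
    exact le_trans (Set.encard_mono hIBb) (hMbaseCard Bb hBb).le
  have hMdB : M✶.IsBase (Set.Icc (r+1) n) := by
    have h' := hMB.compl_isBase_dual
    have heq : M.E \ Set.Icc 1 r = Set.Icc (r+1) n := by
      rw [hME]; ext x; simp only [Set.mem_diff, Set.mem_Icc]; omega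
    rwa [heq] at h'
  have hMdindepCard : ∀ I, M✶.Indep I → I.encard ≤ ((n - r : ℕ) : ℕ∞) := by
    intro I hI
    obtain ⟨Bb, hBb, hIBb⟩ := hI.exists_isBase_superset
    have hc : Bb.encard = ((n - r : ℕ) : ℕ∞) := by
      rw [hBb.encard_eq_encard_of_isBase hMdB, hIccCard]
      exact congrArg _ (by omega)
    exact le_trans (Set.encard_mono hIBb) hc.le
  -- structure of independent sets of M₁ and M₂
  have hI1sub : ∀ I, M₁.Indep I → I ⊆ Set.Icc 1 n ∪ (fun i => n+i) '' Set.Icc 1 r := by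
    intro I hI x hx
    have hxE : x ∈ Set.Icc 1 (2*n) := hE1 ▸ hI.subset_ground hx
    simp only [Set.mem_Icc] at hxE
    by_cases hxn : x ≤ n
    · exact Or.inl (Set.mem_Icc.mpr ⟨hxE.1, hxn⟩)
    · have hxloop : x - n ∈ Set.Icc 1 r := by
        by_contra hc
        have hmem : x - n ∈ Set.Icc (r+1) n := by
          simp only [Set.mem_Icc] at hc ⊢; omega
        have hxeq : n + (x - n) = x := by omega
        have hone : M₁.Indep {n + (x - n)} := hI.subset
          (by rw [Set.singleton_subset_iff, hxeq]; exact hx)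
        exact (hloop1 _ hmem).2 hone
      exact Or.inr ⟨x - n, hxloop, by show n + (x - n) = x; omega⟩
  have hI2sub : ∀ I, M₂.Indep I → I ⊆ Set.Icc 1 n ∪ (fun i => n+i) '' Set.Icc (r+1) n := by
    intro I hI x hx
    have hxE : x ∈ Set.Icc 1 (2*n) := hE2 ▸ hI.subset_ground hx
    simp only [Set.mem_Icc] at hxE
    by_cases hxn : x ≤ n
    · exact Or.inl (Set.mem_Icc.mpr ⟨hxE.1, hxn⟩)
    · have hxloop : x - n ∈ Set.Icc (r+1) n := by
        by_contra hc
        have hmem : x - n ∈ Set.Icc 1 r := by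
          simp only [Set.mem_Icc] at hc ⊢; omega
        have hxeq : n + (x - n) = x := by omega
        have hone : M₂.Indep {n + (x - n)} := hI.subset
          (by rw [Set.singleton_subset_iff, hxeq]; exact hx)
        exact (hloop2 _ hmem).2 hone
      exact Or.inr ⟨x - n, hxloop, by show n + (x - n) = x; omega⟩
  -- cardinality bounds for M₁ / M₂ independent sets
  have hIcc1r : Set.Icc 1 r ⊆ Set.Icc 1 n := by
    intro x hx; simp only [Set.mem_Icc] at hx ⊢; omega
  have hIccr1n : Set.Icc (r+1) n ⊆ Set.Icc 1 n := by
    intro x hx; simp only [Set.mem_Icc] at hx ⊢; omega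
  have hI1card : ∀ I, M₁.Indep I → I.encard ≤ (r : ℕ∞) := by
    intro I hI
    have hfinI : I.Finite := hfin1.subset hI.subset_ground
    obtain ⟨J, hJ, hJE, hJcard, -⟩ := proj_indep hIcc1r hpar1 _ I hfinI le_rfl hI (hI1sub I hI)
    rw [← hJcard]
    exact hMindepCard J (hMofM1 J hJ hJE)
  have hI2card : ∀ I, M₂.Indep I → I.encard ≤ ((n - r : ℕ) : ℕ∞) := by
    intro I hI
    have hfinI : I.Finite := hfin2.subset hI.subset_ground
    obtain ⟨J, hJ, hJE, hJcard, -⟩ := proj_indep hIccr1n hpar2 _ I hfinI le_rfl hI (hI2sub I hI)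
    rw [← hJcard]
    exact hMdindepCard J (hMdofM2 J hJ hJE)
  -- every Mhat-independent set has size at most n
  have hHatCard : ∀ I, Mhat.Indep I → I.encard ≤ (n : ℕ∞) := by
    intro I hI
    obtain ⟨I₁, I₂, h1, h2, rfl⟩ := (hU _).mp hI
    calc (I₁ ∪ I₂).encard ≤ I₁.encard + I₂.encard := Set.encard_union_le _ _
      _ ≤ (r : ℕ∞) + ((n - r : ℕ) : ℕ∞) := add_le_add (hI1card _ h1) (hI2card _ h2)
      _ = (n : ℕ∞) := by norm_cast; omega
  -- an independent set of size n is a base of Mhat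
  have hBaseOfCard : ∀ I, Mhat.Indep I → I.encard = (n : ℕ∞) → Mhat.IsBase I := by
    intro I hI hcard
    rw [isBase_iff_maximal_indep]
    refine ⟨hI, fun J hJ hIJ => ?_⟩
    have hIJ' : I = J := Set.Finite.eq_of_subset_of_encard_le'
      (hhatfin.subset hJ.subset_ground) hIJ (le_trans (hHatCard J hJ) hcard.ge)
    exact hIJ'.ge
  -- an M-independent set of size r is a base of M
  have hMBaseOfCard : ∀ I, M.Indep I → I.encard = (r : ℕ∞) → M.IsBase I := by
    intro I hI hcard
    obtain ⟨Bb, hBb, hIBb⟩ := hI.exists_isBase_superset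
    have hIB : I = Bb := Set.Finite.eq_of_subset_of_encard_le'
      (hMfin.subset hBb.subset_ground) hIBb (by rw [hMbaseCard Bb hBb, hcard])
    rwa [hIB]
  -- B = Icc (n+r+1) (2n) is M₂-independent
  have hBsIndep : M₂.Indep (Set.Icc (n+r+1) (2*n)) := by
    have key : ∀ k, k ≤ n - r →
        M₂.Indep (Set.Icc (r+1) (n-k) ∪ Set.Icc (n+(n-k)+1) (2*n)) := by
      intro k
      induction k with
      | zero =>
        intro _
        have heq : Set.Icc (r+1) (n-0) ∪ Set.Icc (n+(n-0)+1) (2*n) = Set.Icc (r+1) n := by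
          ext x; simp only [Set.mem_union, Set.mem_Icc]; omega
        rw [heq]
        exact hM2ofMd _ hMdB.indep
      | succ k ih =>
        intro hk
        have hind := ih (by omega)
        have hjr : r + 1 ≤ n - k := by omega
        have hpar := hpar2 (n-k) (Set.mem_Icc.mpr ⟨hjr, by omega⟩)
        have hjmem : n - k ∈ Set.Icc (r+1) (n-k) ∪ Set.Icc (n+(n-k)+1) (2*n) :=
          Or.inl (Set.mem_Icc.mpr ⟨hjr, le_refl _⟩)
        have hnjmem : n + (n-k) ∉ Set.Icc (r+1) (n-k) ∪ Set.Icc (n+(n-k)+1) (2*n) := by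
          simp only [Set.mem_union, Set.mem_Icc]; omega
        have hswap := parallel_swap hpar hind hjmem hnjmem
        have heq : insert (n+(n-k)) ((Set.Icc (r+1) (n-k) ∪ Set.Icc (n+(n-k)+1) (2*n)) \ {n-k})
            = Set.Icc (r+1) (n-(k+1)) ∪ Set.Icc (n+(n-(k+1))+1) (2*n) := by
          ext x
          simp only [Set.mem_insert_iff, Set.mem_diff, Set.mem_union, Set.mem_Icc,
            Set.mem_singleton_iff]
          omega
        rwa [heq] at hswap
    have h' := key (n-r) le_rfl
    have heq : Set.Icc (r+1) (n-(n-r)) ∪ Set.Icc (n+(n-(n-r))+1) (2*n)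
        = Set.Icc (n+r+1) (2*n) := by
      ext x; simp only [Set.mem_union, Set.mem_Icc]; omega
    rwa [heq] at h'
  -- the ground set Icc 1 n is a base of Mhat
  have hEbase : Mhat.IsBase (Set.Icc 1 n) := by
    apply hBaseOfCard
    · refine (hU _).mpr ⟨Set.Icc 1 r, Set.Icc (r+1) n, hM1ofM _ hMB.indep,
        hM2ofMd _ hMdB.indep, ?_⟩
      ext x; simp only [Set.mem_union, Set.mem_Icc]; omega
    · rw [hIccCard]; exact congrArg _ (by omega)
  -- decomposition of a base of Mhat
  have hDecomp : ∀ Bh I₁ I₂, Mhat.IsBase Bh → M₁.Indep I₁ → M₂.Indep I₂ → Bh = I₁ ∪ I₂ →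
      I₁.encard = (r : ℕ∞) := by
    intro Bh I₁ I₂ hBh h1 h2 hBeq
    have hBn : Bh.encard = (n : ℕ∞) := by
      rw [hBh.encard_eq_encard_of_isBase hEbase, hIccCard]; exact congrArg _ (by omega)
    refine le_antisymm (hI1card _ h1) ?_
    obtain ⟨a, ha⟩ : ∃ a : ℕ, I₁.encard = (a : ℕ∞) :=
      ⟨_, (hfin1.subset h1.subset_ground).encard_eq_coe_toFinset_card⟩
    have hchain : (n : ℕ∞) ≤ (a : ℕ∞) + ((n - r : ℕ) : ℕ∞) := by
      rw [← hBn, hBeq, ← ha]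
      exact le_trans (Set.encard_union_le _ _) (add_le_add le_rfl (hI2card _ h2))
    have har : (a : ℕ∞) ≤ (r : ℕ∞) := ha ▸ hI1card _ h1
    rw [ha]
    have h1' : n ≤ a + (n - r) := by exact_mod_cast hchain
    have h2' : a ≤ r := by exact_mod_cast har
    exact_mod_cast (by omega : r ≤ a)
  -- an M₁-independent set of size r disjoint from X yields a contradiction
  have hnoBase : ∀ J, M₁.Indep J → J.encard = (r : ℕ∞) → X ∩ J = ∅ → False := by
    intro J hJ hJc hXJ
    have hdisj : Disjoint J (Set.Icc (n+r+1) (2*n)) := by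
      rw [Set.disjoint_left]
      intro x hx hxB
      simp only [Set.mem_Icc] at hxB
      rcases hI1sub J hJ hx with hxE | ⟨j, hj, hjx⟩
      · simp only [Set.mem_Icc] at hxE; omega
      · have hjx' : n + j = x := hjx
        simp only [Set.mem_Icc] at hj; omega
    have hCindep : Mhat.Indep (J ∪ Set.Icc (n+r+1) (2*n)) :=
      (hU _).mpr ⟨J, _, hJ, hBsIndep, rfl⟩
    have hCcard : (J ∪ Set.Icc (n+r+1) (2*n)).encard = (n : ℕ∞) := by
      rw [Set.encard_union_eq hdisj, hJc, hIccCard]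
      norm_cast; omega
    obtain ⟨x, hxX, hxC⟩ := hX.2.1 _ (hBaseOfCard _ hCindep hCcard)
    rcases hxC with hxJ | hxB
    · have hm : x ∈ X ∩ J := ⟨hxX, hxJ⟩
      rw [hXJ] at hm; exact absurd hm (Set.notMem_empty x)
    · have hm : x ∈ X ∩ Set.Icc (n+r+1) (2*n) := ⟨hxX, hxB⟩
      rw [hXB] at hm; exact absurd hm (Set.notMem_empty x)
  -- Claim C : if i ∈ X with 1 ≤ i ≤ r then n + i ∈ X
  have hClaimC : ∀ i, i ∈ X → i ∈ Set.Icc 1 r → n + i ∈ X := by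
    intro i hiX hir
    by_contra hniX
    obtain ⟨Bh, hBh, hBhX⟩ := hX.2.2 (X \ {i})
      (by rw [Set.ssubset_def]; exact ⟨Set.diff_subset, fun h => (h hiX).2 rfl⟩)
    have hXBh : ∀ x ∈ X ∩ Bh, x = i := by
      intro x hx
      by_contra hne
      have hm : x ∈ (X \ {i}) ∩ Bh := ⟨⟨hx.1, hne⟩, hx.2⟩
      rw [hBhX] at hm; exact absurd hm (Set.notMem_empty x)
    obtain ⟨I₁, I₂, h1, h2, hBeq⟩ := (hU Bh).mp hBh.indep
    have hc1 : I₁.encard = (r : ℕ∞) := hDecomp Bh I₁ I₂ hBh h1 h2 hBeq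
    by_cases hiI1 : i ∈ I₁
    · have hpar := hpar1 i hir
      have hniI1 : n + i ∉ I₁ := by
        intro hmem
        exact hpar.2.2.2 (h1.subset (by
          rw [Set.insert_subset_iff, Set.singleton_subset_iff]; exact ⟨hiI1, hmem⟩))
      have hswap : M₁.Indep (insert (n+i) (I₁ \ {i})) := parallel_swap hpar h1 hiI1 hniI1
      have hc1' : (insert (n+i) (I₁ \ {i})).encard = (r : ℕ∞) := by
        rw [Set.encard_insert_of_notMem (fun h => hniI1 h.1),
          Set.encard_diff_singleton_add_one hiI1]
        exact hc1
      refine hnoBase _ hswap hc1' ?_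
      rw [Set.eq_empty_iff_forall_notMem]
      rintro x ⟨hxX, hxm⟩
      rcases Set.mem_insert_iff.mp hxm with rfl | ⟨hxI, hxne⟩
      · exact hniX hxX
      · exact hxne (Set.mem_singleton_iff.mpr
          (hXBh x ⟨hxX, by rw [hBeq]; exact Or.inl hxI⟩))
    · refine hnoBase _ h1 hc1 ?_
      rw [Set.eq_empty_iff_forall_notMem]
      rintro x ⟨hxX, hxI⟩
      have hxi : x = i := hXBh x ⟨hxX, by rw [hBeq]; exact Or.inl hxI⟩
      exact hiI1 (hxi ▸ hxI)
  -- now prove the three parts of the cocircuit property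
  refine ⟨?_, ?_, ?_⟩
  · rw [hME]; exact Set.inter_subset_right
  · -- meets every base of M
    intro Bas hBas
    rw [Set.nonempty_iff_ne_empty]
    intro hempty
    refine hnoBase Bas (hM1ofM _ hBas.indep) (hMbaseCard _ hBas) ?_
    rw [Set.eq_empty_iff_forall_notMem]
    rintro x ⟨hxX, hxBas⟩
    have hxE : x ∈ Set.Icc 1 n := by rw [← hME]; exact hBas.subset_ground hxBas
    have hm : x ∈ (X ∩ Set.Icc 1 n) ∩ Bas := ⟨⟨hxX, hxE⟩, hxBas⟩
    rw [hempty] at hm; exact absurd hm (Set.notMem_empty x)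
  · -- minimality
    intro D' hD'
    have hYss : D' ∪ (X \ Set.Icc 1 n) ⊂ X := by
      obtain ⟨z, hzXE, hzD'⟩ := Set.exists_of_ssubset hD'
      rw [Set.ssubset_def]
      constructor
      · rintro x (hx | hx)
        · exact (hD'.1 hx).1
        · exact hx.1
      · intro hcon
        rcases hcon hzXE.1 with hz | hz
        · exact hzD' hz
        · exact hz.2 hzXE.2
    obtain ⟨Bh, hBh, hYBh⟩ := hX.2.2 _ hYss
    obtain ⟨I₁, I₂, h1, h2, hBeq⟩ := (hU Bh).mp hBh.indep
    have hc1 : I₁.encard = (r : ℕ∞) := hDecomp Bh I₁ I₂ hBh h1 h2 hBeq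
    have hfinI : I₁.Finite := hfin1.subset h1.subset_ground
    obtain ⟨J, hJ, hJE, hJcard, hJprop⟩ :=
      proj_indep hIcc1r hpar1 _ I₁ hfinI le_rfl h1 (hI1sub I₁ h1)
    have hJM : M.Indep J := hMofM1 J hJ hJE
    have hJbase : M.IsBase J := hMBaseOfCard J hJM (by rw [hJcard]; exact hc1)
    refine ⟨J, hJbase, ?_⟩
    rw [Set.eq_empty_iff_forall_notMem]
    rintro x ⟨hxD', hxJ⟩
    have hxmem : x ∈ D' ∪ (X \ Set.Icc 1 n) := Or.inl hxD'
    rcases hJprop x hxJ with hxI | hnxI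
    · -- x ∈ I₁ ⊆ Bh, contradiction with hYBh
      have hm : x ∈ (D' ∪ (X \ Set.Icc 1 n)) ∩ Bh := ⟨hxmem, by rw [hBeq]; exact Or.inl hxI⟩
      rw [hYBh] at hm; exact absurd hm (Set.notMem_empty x)
    · -- n + x ∈ I₁ : then x ≤ r, so n + x ∈ X, contradiction
      have hxE : x ∈ Set.Icc 1 n := hJE hxJ
      simp only [Set.mem_Icc] at hxE
      have hxr : x ∈ Set.Icc 1 r := by
        rcases hI1sub I₁ h1 hnxI with hmem | ⟨j, hj, hjx⟩
        · simp only [Set.mem_Icc] at hmem; omega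
        · have hjx' : n + j = n + x := hjx
          simp only [Set.mem_Icc] at hj ⊢; omega
      have hxX : x ∈ X := (hD'.1 hxD').1
      have hnxX : n + x ∈ X := hClaimC x hxX hxr
      have hnxY : n + x ∈ D' ∪ (X \ Set.Icc 1 n) :=
        Or.inr ⟨hnxX, by simp only [Set.mem_Icc]; omega⟩
      have hm : n + x ∈ (D' ∪ (X \ Set.Icc 1 n)) ∩ Bh :=
        ⟨hnxY, by rw [hBeq]; exact Or.inl hnxI⟩
      rw [hYBh] at hm; exact absurd hm (Set.notMem_empty (n+x))


end NL
end

section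
/- Let M̂ be the Brylawski–Ziegler matroid union constructed from a rank-r matroid M on E with basis {1,…,r} and auxiliary sets A, B. If X is a cocircuit of M̂ with X ∩ A = ∅, then X ∩ E is a cocircuit of the dual matroid M*. -/
open Set Matroid
namespace NL
variable {γ : Type*}

lemma swap_indep {M : Matroid γ} {e f : γ} {I : Set γ}
    (hpar : MParallel M e f) (hI : M.Indep I) (he : e ∈ I) :
    M.Indep (insert f (I \ {e})) := by
  obtain ⟨hne, hei, hfi, hd⟩ := hpar
  by_cases hfI : f ∈ I \ {e}
  · rw [insert_eq_of_mem hfI]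
    exact hI.subset diff_subset
  have hIe : M.Indep (I \ {e}) := hI.subset diff_subset
  rw [hIe.insert_indep_iff_of_notMem hfI]
  refine ⟨hfi.subset_ground rfl, fun hcl => ?_⟩
  have heE : e ∈ M.E := hei.subset_ground rfl
  have hecl : e ∈ M.closure {f} := by
    by_contra h
    have h1 : ¬ M.Indep (insert e {f}) := hd
    rw [hfi.insert_indep_iff_of_notMem (by simpa using hne)] at h1
    exact h1 ⟨heE, h⟩
  have hsub : M.closure {f} ⊆ M.closure (I \ {e}) := by
    have := M.closure_subset_closure (Set.singleton_subset_iff.mpr hcl)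
    rwa [closure_closure] at this
  exact hI.notMem_closure_sdiff_of_mem he (hsub hecl)

lemma A_indep (n r : ℕ) (hrn : r ≤ n) (M₁ : Matroid ℕ)
    (hpar1 : ∀ i ∈ Set.Icc 1 r, MParallel M₁ i (n+i))
    (hbase : M₁.Indep (Set.Icc 1 r)) :
    M₁.Indep (Set.Icc (n+1) (n+r)) := by
  have key : ∀ k, k ≤ r → M₁.Indep {x | (n+1 ≤ x ∧ x ≤ n+k) ∨ (k+1 ≤ x ∧ x ≤ r)} := by
    intro k
    induction k with
    | zero =>
      intro _
      have h0 : {x | (n+1 ≤ x ∧ x ≤ n+0) ∨ (0+1 ≤ x ∧ x ≤ r)} = Set.Icc 1 r := by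
        ext x; simp only [Set.mem_setOf_eq, Set.mem_Icc]; omega
      rw [h0]; exact hbase
    | succ k ih =>
      intro hk
      have hCk := ih (by omega)
      have hp := hpar1 (k+1) (Set.mem_Icc.mpr ⟨by omega, by omega⟩)
      have hmem : (k+1) ∈ {x | (n+1 ≤ x ∧ x ≤ n+k) ∨ (k+1 ≤ x ∧ x ≤ r)} :=
        Or.inr ⟨le_refl _, hk⟩
      have hsw := swap_indep hp hCk hmem
      have heq : insert (n+(k+1)) ({x | (n+1 ≤ x ∧ x ≤ n+k) ∨ (k+1 ≤ x ∧ x ≤ r)} \ {k+1})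
          = {x | (n+1 ≤ x ∧ x ≤ n+(k+1)) ∨ ((k+1)+1 ≤ x ∧ x ≤ r)} := by
        ext x
        simp only [Set.mem_insert_iff, Set.mem_diff, Set.mem_setOf_eq, Set.mem_singleton_iff]
        omega
      rwa [heq] at hsw
  have hA : Set.Icc (n+1) (n+r) = {x | (n+1 ≤ x ∧ x ≤ n+r) ∨ (r+1 ≤ x ∧ x ≤ r)} := by
    ext x; simp only [Set.mem_setOf_eq, Set.mem_Icc]; omega
  rw [hA]; exact key r le_rfl

def piSet (n : ℕ) (I : Set ℕ) : Set ℕ :=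
  {j | (j ∈ I ∧ j ∈ Set.Icc 1 n) ∨ (j ∈ Set.Icc 1 n ∧ n + j ∈ I)}

lemma piSet_subset (n : ℕ) (I : Set ℕ) : piSet n I ⊆ Set.Icc 1 n :=
  fun _ hj => hj.elim (fun h => h.2) (fun h => h.1)

lemma pi_indep (n r : ℕ) (M₂ : Matroid ℕ) (hE2 : M₂.E = Set.Icc 1 (2*n))
    (hpar2 : ∀ i ∈ Set.Icc (r+1) n, MParallel M₂ i (n+i))
    (hloop2 : ∀ i ∈ Set.Icc 1 r, MLoop M₂ (n+i)) :
    ∀ k I, (I \ Set.Icc 1 n).ncard = k → M₂.Indep I →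
      M₂.Indep (piSet n I) ∧ (piSet n I).ncard = I.ncard := by
  intro k
  induction k using Nat.strong_induction_on with
  | _ k IH =>
  intro I hk hI
  have hIfin : I.Finite := (Set.finite_Icc 1 (2*n)).subset (hE2 ▸ hI.subset_ground)
  by_cases hsub : I ⊆ Set.Icc 1 n
  · have hpieq : piSet n I = I := by
      ext j
      simp only [piSet, Set.mem_setOf_eq]
      constructor
      · rintro (⟨h1, _⟩ | ⟨h1, h2⟩)
        · exact h1
        · exfalso
          have h3 := hsub h2
          simp only [Set.mem_Icc] at h3 h1
          omega
      · intro hj; exact Or.inl ⟨hj, hsub hj⟩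
    rw [hpieq]; exact ⟨hI, rfl⟩
  · obtain ⟨m, hmI, hmn⟩ := Set.not_subset.mp hsub
    have hmE : m ∈ Set.Icc 1 (2*n) := hE2 ▸ hI.subset_ground hmI
    simp only [Set.mem_Icc] at hmE
    have hmgt : n < m := by
      by_contra h
      exact hmn (Set.mem_Icc.mpr ⟨hmE.1, by omega⟩)
    set j := m - n with hjdef
    have hm : m = n + j := by omega
    have hj1 : 1 ≤ j := by omega
    have hjn : j ≤ n := by omega
    have hjr : r + 1 ≤ j := by
      by_contra h
      have hl := hloop2 j (Set.mem_Icc.mpr ⟨hj1, by omega⟩)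
      exact hl.2 (hI.subset (by rw [← hm]; exact Set.singleton_subset_iff.mpr hmI))
    have hp := hpar2 j (Set.mem_Icc.mpr ⟨hjr, hjn⟩)
    have hjI : j ∉ I := by
      intro hjI
      refine hp.2.2.2 (hI.subset ?_)
      intro z hz
      rcases hz with rfl | hz
      · exact hjI
      · rw [Set.mem_singleton_iff] at hz
        rw [hz, ← hm]; exact hmI
    have hI' : M₂.Indep (insert j (I \ {m})) := by
      have h := swap_indep (mparallel_symm hp) hI (show n + j ∈ I by rw [← hm]; exact hmI)
      rwa [← hm] at h
    have hd : (insert j (I \ {m})) \ Set.Icc 1 n = (I \ Set.Icc 1 n) \ {m} := by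
      ext x
      simp only [Set.mem_insert_iff, Set.mem_diff, Set.mem_singleton_iff, Set.mem_Icc]
      constructor
      · rintro ⟨rfl | ⟨hxI, hxm⟩, hx⟩
        · omega
        · exact ⟨⟨hxI, hx⟩, hxm⟩
      · rintro ⟨⟨hxI, hx⟩, hxm⟩
        exact ⟨Or.inr ⟨hxI, hxm⟩, hx⟩
    have hmd : m ∈ I \ Set.Icc 1 n := ⟨hmI, by simp only [Set.mem_Icc]; omega⟩
    have hdcard := Set.ncard_diff_singleton_add_one hmd (hIfin.subset diff_subset)
    have hklt : ((I \ Set.Icc 1 n) \ {m}).ncard < k := by omega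
    obtain ⟨hind, hcard⟩ := IH _ hklt (insert j (I \ {m})) (by rw [hd]) hI'
    have hpi_eq : piSet n (insert j (I \ {m})) = piSet n I := by
      ext x
      simp only [piSet, Set.mem_setOf_eq, Set.mem_insert_iff, Set.mem_diff,
        Set.mem_singleton_iff, Set.mem_Icc]
      constructor
      · rintro (⟨rfl | ⟨hxI, hxm⟩, hx⟩ | ⟨hx, h2 | ⟨h2, _⟩⟩)
        · exact Or.inr ⟨⟨hj1, hjn⟩, by rw [← hm]; exact hmI⟩
        · exact Or.inl ⟨hxI, hx⟩
        · omega
        · exact Or.inr ⟨hx, h2⟩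
      · rintro (⟨hxI, hx⟩ | ⟨hx, h2⟩)
        · exact Or.inl ⟨Or.inr ⟨hxI, by omega⟩, hx⟩
        · by_cases hxj : x = j
          · subst hxj
            exact Or.inl ⟨Or.inl rfl, hx⟩
          · exact Or.inr ⟨hx, Or.inr ⟨h2, by omega⟩⟩
    have hcardI : (insert j (I \ {m})).ncard = I.ncard := by
      rw [Set.ncard_insert_of_notMem (fun h => hjI h.1) (hIfin.subset diff_subset)]
      have h2 := Set.ncard_diff_singleton_add_one hmI hIfin
      omega
    rw [← hpi_eq]
    exact ⟨hind, by rw [hcard, hcardI]⟩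


/-- if `X` is a cocircuit of `M̂` with `X ∩ A = ∅`, then
`X ∩ E` is a cocircuit of the dual `M✶`. -/
theorem bz_cocircuit_restricts_dual
    (n r : ℕ) (hrn : r ≤ n) (M M₁ M₂ Mhat : Matroid ℕ)
    (hME : M.E = Set.Icc 1 n) (hMB : M.IsBase (Set.Icc 1 r))
    (hE1 : M₁.E = Set.Icc 1 (2*n)) (hres1 : M₁ ↾ (Set.Icc 1 n) = M)
    (hpar1 : ∀ i ∈ Set.Icc 1 r, MParallel M₁ i (n+i))
    (hloop1 : ∀ i ∈ Set.Icc (r+1) n, MLoop M₁ (n+i))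
    (hE2 : M₂.E = Set.Icc 1 (2*n)) (hres2 : M₂ ↾ (Set.Icc 1 n) = M✶)
    (hpar2 : ∀ i ∈ Set.Icc (r+1) n, MParallel M₂ i (n+i))
    (hloop2 : ∀ i ∈ Set.Icc 1 r, MLoop M₂ (n+i))
    (hEh : Mhat.E = Set.Icc 1 (2*n))
    (hU : ∀ I, Mhat.Indep I ↔ ∃ I₁ I₂, M₁.Indep I₁ ∧ M₂.Indep I₂ ∧ I = I₁ ∪ I₂)
    (X : Set ℕ) (hX : Cocircuit Mhat X) (hXA : X ∩ Set.Icc (n+1) (n+r) = ∅) :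
    Cocircuit M✶ (X ∩ Set.Icc 1 n) := by
  -- cardinalities of intervals
  have hIccCard : ∀ a b : ℕ, (Set.Icc a b).ncard = b + 1 - a := by
    intro a b
    rw [← Finset.coe_Icc, Set.ncard_coe_finset, Nat.card_Icc]
  -- finiteness helpers
  have hfin1 : ∀ {S : Set ℕ}, M₁.Indep S → S.Finite :=
    fun h => (Set.finite_Icc 1 (2*n)).subset (hE1 ▸ h.subset_ground)
  have hfin2 : ∀ {S : Set ℕ}, M₂.Indep S → S.Finite :=
    fun h => (Set.finite_Icc 1 (2*n)).subset (hE2 ▸ h.subset_ground)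
  have hfinh : ∀ {S : Set ℕ}, Mhat.Indep S → S.Finite :=
    fun h => (Set.finite_Icc 1 (2*n)).subset (hEh ▸ h.subset_ground)
  have hfind : ∀ {S : Set ℕ}, M✶.Indep S → S.Finite :=
    fun h => (Set.finite_Icc 1 n).subset (by
      have := h.subset_ground
      rwa [dual_ground, hME] at this)
  -- E₁ is a base of M₁
  have hE1indep : M₁.Indep (Set.Icc 1 r) := by
    have h := hMB.indep
    rw [← hres1, restrict_indep_iff] at h
    exact h.1
  have hE1base : M₁.IsBase (Set.Icc 1 r) := by
    rw [isBase_iff_maximal_indep]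
    refine ⟨hE1indep, fun J hJ hsub => ?_⟩
    intro e heJ
    by_contra heE1
    have heE : e ∈ Set.Icc 1 (2*n) := hE1 ▸ hJ.subset_ground heJ
    simp only [Set.mem_Icc] at heE heE1
    by_cases hen : e ≤ n
    · have hins : M.Indep (insert e (Set.Icc 1 r)) := by
        rw [← hres1, restrict_indep_iff]
        exact ⟨hJ.subset (Set.insert_subset heJ hsub),
          Set.insert_subset (Set.mem_Icc.mpr ⟨by omega, hen⟩) (Set.Icc_subset_Icc le_rfl hrn)⟩
      have heq := hMB.eq_of_subset_indep hins (Set.subset_insert _ _)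
      have hmem : e ∈ Set.Icc 1 r := heq ▸ Set.mem_insert _ _
      simp only [Set.mem_Icc] at hmem
      omega
    · have hje : e = n + (e - n) := by omega
      by_cases hjr : e - n ≤ r
      · have hp := hpar1 (e - n) (Set.mem_Icc.mpr ⟨by omega, hjr⟩)
        refine hp.2.2.2 (hJ.subset ?_)
        intro z hz
        rcases hz with rfl | hz
        · exact hsub (Set.mem_Icc.mpr ⟨by omega, hjr⟩)
        · rw [Set.mem_singleton_iff] at hz
          rw [hz, ← hje]; exact heJ
      · have hl := hloop1 (e - n) (Set.mem_Icc.mpr ⟨by omega, by omega⟩)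
        exact hl.2 (hJ.subset (by rw [← hje]; exact Set.singleton_subset_iff.mpr heJ))
  -- E₂ is a base of M✶ and of M₂
  have hcompl : M✶.IsBase (Set.Icc (r+1) n) := by
    have h := hMB.compl_isBase_dual
    rw [hME] at h
    have hEd : Set.Icc 1 n \ Set.Icc 1 r = Set.Icc (r+1) n := by
      ext x; simp only [Set.mem_diff, Set.mem_Icc]; omega
    rwa [hEd] at h
  have hE2indep : M₂.Indep (Set.Icc (r+1) n) := by
    have h := hcompl.indep
    rw [← hres2, restrict_indep_iff] at h
    exact h.1
  have hE2base2 : M₂.IsBase (Set.Icc (r+1) n) := by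
    rw [isBase_iff_maximal_indep]
    refine ⟨hE2indep, fun J hJ hsub => ?_⟩
    intro e heJ
    by_contra heE2
    have heE : e ∈ Set.Icc 1 (2*n) := hE2 ▸ hJ.subset_ground heJ
    simp only [Set.mem_Icc] at heE heE2
    by_cases hen : e ≤ n
    · have hins : M✶.Indep (insert e (Set.Icc (r+1) n)) := by
        rw [← hres2, restrict_indep_iff]
        exact ⟨hJ.subset (Set.insert_subset heJ hsub),
          Set.insert_subset (Set.mem_Icc.mpr ⟨by omega, hen⟩) (Set.Icc_subset_Icc (by omega) le_rfl)⟩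
      have heq := hcompl.eq_of_subset_indep hins (Set.subset_insert _ _)
      have hmem : e ∈ Set.Icc (r+1) n := heq ▸ Set.mem_insert _ _
      simp only [Set.mem_Icc] at hmem
      omega
    · have hje : e = n + (e - n) := by omega
      by_cases hjr : e - n ≤ r
      · have hl := hloop2 (e - n) (Set.mem_Icc.mpr ⟨by omega, hjr⟩)
        exact hl.2 (hJ.subset (by rw [← hje]; exact Set.singleton_subset_iff.mpr heJ))
      · have hp := hpar2 (e - n) (Set.mem_Icc.mpr ⟨by omega, by omega⟩)
        refine hp.2.2.2 (hJ.subset ?_)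
        intro z hz
        rcases hz with rfl | hz
        · exact hsub (Set.mem_Icc.mpr ⟨by omega, by omega⟩)
        · rw [Set.mem_singleton_iff] at hz
          rw [hz, ← hje]; exact heJ
  -- cardinality bounds
  have h1le : ∀ I, M₁.Indep I → I.ncard ≤ r := by
    intro I hI
    obtain ⟨B, hB, hIB⟩ := hI.exists_isBase_superset
    have hBc : B.ncard = r := by
      rw [hB.ncard_eq_ncard_of_isBase hE1base, hIccCard]; omega
    calc I.ncard ≤ B.ncard := Set.ncard_le_ncard hIB (hfin1 hB.indep)
      _ = r := hBc
  have h2le : ∀ I, M₂.Indep I → I.ncard ≤ n - r := by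
    intro I hI
    obtain ⟨B, hB, hIB⟩ := hI.exists_isBase_superset
    have hBc : B.ncard = n - r := by
      rw [hB.ncard_eq_ncard_of_isBase hE2base2, hIccCard]; omega
    calc I.ncard ≤ B.ncard := Set.ncard_le_ncard hIB (hfin2 hB.indep)
      _ = n - r := hBc
  have hhatle : ∀ I, Mhat.Indep I → I.ncard ≤ n := by
    intro I hI
    obtain ⟨I₁, I₂, h1, h2, rfl⟩ := (hU I).mp hI
    have := Set.ncard_union_le I₁ I₂
    have := h1le I₁ h1
    have := h2le I₂ h2
    omega
  have h2base_of_card : ∀ J, M₂.Indep J → J.ncard = n - r → M₂.IsBase J := by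
    intro J hJ hc
    obtain ⟨B, hB, hJB⟩ := hJ.exists_isBase_superset
    have hBc : B.ncard = n - r := by
      rw [hB.ncard_eq_ncard_of_isBase hE2base2, hIccCard]; omega
    have heq : J = B :=
      Set.eq_of_subset_of_ncard_le hJB (by omega) (hfin2 hB.indep)
    rw [heq]; exact hB
  have hdbase_of_card : ∀ J, M✶.Indep J → J.ncard = n - r → M✶.IsBase J := by
    intro J hJ hc
    obtain ⟨B, hB, hJB⟩ := hJ.exists_isBase_superset
    have hBc : B.ncard = n - r := by
      rw [hB.ncard_eq_ncard_of_isBase hcompl, hIccCard]; omega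
    have heq : J = B :=
      Set.eq_of_subset_of_ncard_le hJB (by omega) (hfind hB.indep)
    rw [heq]; exact hB
  -- E = Icc 1 n is a base of Mhat
  have hEbase : Mhat.IsBase (Set.Icc 1 n) := by
    rw [isBase_iff_maximal_indep]
    have hind : Mhat.Indep (Set.Icc 1 n) := by
      rw [hU]
      refine ⟨Set.Icc 1 r, Set.Icc (r+1) n, hE1indep, hE2indep, ?_⟩
      ext x; simp only [Set.mem_Icc, Set.mem_union]; omega
    refine ⟨hind, fun J hJ hsub => ?_⟩
    have hle := hhatle J hJ
    have hcn : (Set.Icc 1 n).ncard = n := by rw [hIccCard]; omega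
    exact (Set.eq_of_subset_of_ncard_le hsub (by omega) (hfinh hJ)).ge
  have hhatcard : ∀ B, Mhat.IsBase B → B.ncard = n := by
    intro B hB
    rw [hB.ncard_eq_ncard_of_isBase hEbase, hIccCard]; omega
  -- A is independent in M₁
  have hAindep : M₁.Indep (Set.Icc (n+1) (n+r)) := A_indep n r hrn M₁ hpar1 hE1indep
  have hAcard : (Set.Icc (n+1) (n+r)).ncard = r := by rw [hIccCard]; omega
  have hAdisj : ∀ {B₂' : Set ℕ}, M₂.Indep B₂' → Disjoint (Set.Icc (n+1) (n+r)) B₂' := by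
    intro B₂' hind
    rw [Set.disjoint_left]
    intro a haA haB
    obtain ⟨h1, h2⟩ := Set.mem_Icc.mp haA
    have ha : a = n + (a - n) := by omega
    have hl := hloop2 (a - n) (Set.mem_Icc.mpr ⟨by omega, by omega⟩)
    exact hl.2 (hind.subset (by rw [← ha]; exact Set.singleton_subset_iff.mpr haB))
  -- Lemma *: A ∪ B₂' is a base of Mhat for any M₂-base B₂'
  have hAB : ∀ B₂', M₂.IsBase B₂' → Mhat.IsBase (Set.Icc (n+1) (n+r) ∪ B₂') := by
    intro B₂' hB₂'
    have hind : Mhat.Indep (Set.Icc (n+1) (n+r) ∪ B₂') :=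
      (hU _).mpr ⟨_, B₂', hAindep, hB₂'.indep, rfl⟩
    have hB₂c : B₂'.ncard = n - r := by
      rw [hB₂'.ncard_eq_ncard_of_isBase hE2base2, hIccCard]; omega
    have hcard : (Set.Icc (n+1) (n+r) ∪ B₂').ncard = n := by
      rw [Set.ncard_union_eq (hAdisj hB₂'.indep) (Set.finite_Icc _ _) (hfin2 hB₂'.indep),
        hAcard, hB₂c]
      omega
    rw [isBase_iff_maximal_indep]
    refine ⟨hind, fun J hJ hsub => ?_⟩
    have hle := hhatle J hJ
    exact (Set.eq_of_subset_of_ncard_le hsub (by omega) (hfinh hJ)).ge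
  -- decomposition: each Mhat-base contains an M₂-base
  have hdecomp : ∀ B, Mhat.IsBase B → ∃ B₂, M₂.IsBase B₂ ∧ B₂ ⊆ B := by
    intro B hB
    obtain ⟨I₁, I₂, h1, h2, hBe⟩ := (hU B).mp hB.indep
    have hdisj : Disjoint I₁ (I₂ \ I₁) := Set.disjoint_left.mpr fun a ha h => h.2 ha
    have hU2 : B = I₁ ∪ (I₂ \ I₁) := by rw [hBe, Set.union_diff_self]
    have h2' : M₂.Indep (I₂ \ I₁) := h2.subset diff_subset
    have hc : I₁.ncard + (I₂ \ I₁).ncard = n := by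
      rw [← Set.ncard_union_eq hdisj (hfin1 h1) (hfin2 h2'), ← hU2, hhatcard B hB]
    have h1c := h1le I₁ h1
    have h2c := h2le _ h2'
    have hcc : (I₂ \ I₁).ncard = n - r := by omega
    exact ⟨I₂ \ I₁, h2base_of_card _ h2' hcc, by rw [hU2]; exact Set.subset_union_right⟩
  -- every M✶-base is an M₂-base
  have hdual2 : ∀ B, M✶.IsBase B → M₂.IsBase B := by
    intro B hB
    have hind : M₂.Indep B := by
      have h := hB.indep
      rw [← hres2, restrict_indep_iff] at h
      exact h.1
    have hc : B.ncard = n - r := by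
      rw [hB.ncard_eq_ncard_of_isBase hcompl, hIccCard]; omega
    exact h2base_of_card B hind hc
  -- X is contained in the ground set
  have hXsub : X ⊆ Set.Icc 1 (2*n) := hEh ▸ hX.1
  have hXAmem : ∀ {y : ℕ}, y ∈ X → y ∈ Set.Icc (n+1) (n+r) → False := by
    intro y hy hyA
    have : y ∈ X ∩ Set.Icc (n+1) (n+r) := ⟨hy, hyA⟩
    rw [hXA] at this
    exact this
  -- KEY CLAIM: if i ∈ X with r+1 ≤ i ≤ n then n+i ∈ X
  have key : ∀ i, i ∈ X → r + 1 ≤ i → i ≤ n → n + i ∈ X := by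
    intro i hiX hir hin
    by_contra hniX
    have hssub : X \ {i} ⊂ X := Set.sdiff_singleton_ssubset.mpr hiX
    obtain ⟨B0, hB0, hB0X⟩ := hX.2.2 (X \ {i}) hssub
    obtain ⟨B₂₀, hB₂₀, hsub0⟩ := hdecomp B0 hB0
    have hB₂₀X : ∀ y ∈ B₂₀, y ∈ X → y = i := by
      intro y hy hyX
      by_contra hne
      have : y ∈ (X \ {i}) ∩ B0 := ⟨⟨hyX, hne⟩, hsub0 hy⟩
      rw [hB0X] at this
      exact this
    by_cases hi : i ∈ B₂₀
    · have hp := hpar2 i (Set.mem_Icc.mpr ⟨hir, hin⟩)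
      have hni : n + i ∉ B₂₀ := by
        intro h
        exact hp.2.2.2 (hB₂₀.indep.subset (by
          intro z hz
          rcases hz with rfl | hz
          · exact hi
          · rw [Set.mem_singleton_iff] at hz; rw [hz]; exact h))
      have hB₂'ind : M₂.Indep (insert (n+i) (B₂₀ \ {i})) := swap_indep hp hB₂₀.indep hi
      have hB₂₀c : B₂₀.ncard = n - r := by
        rw [hB₂₀.ncard_eq_ncard_of_isBase hE2base2, hIccCard]; omega
      have hB₂'c : (insert (n+i) (B₂₀ \ {i})).ncard = n - r := by
        rw [Set.ncard_insert_of_notMem (fun h => hni h.1) ((hfin2 hB₂₀.indep).subset diff_subset)]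
        have := Set.ncard_diff_singleton_add_one hi (hfin2 hB₂₀.indep)
        omega
      have hB₂'base := h2base_of_card _ hB₂'ind hB₂'c
      have hbase := hAB _ hB₂'base
      obtain ⟨y, hyX, hyB⟩ := hX.2.1 _ hbase
      rcases hyB with hyA | hyB
      · exact hXAmem hyX hyA
      · rcases hyB with rfl | ⟨hyB, hyne⟩
        · exact hniX hyX
        · exact hyne (hB₂₀X y hyB hyX)
    · have hbase := hAB _ hB₂₀
      obtain ⟨y, hyX, hyB⟩ := hX.2.1 _ hbase
      rcases hyB with hyA | hyB
      · exact hXAmem hyX hyA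
      · exact hi ((hB₂₀X y hyB hyX) ▸ hyB)
  -- now prove the three parts of the cocircuit property
  refine ⟨?_, ?_, ?_⟩
  · rw [dual_ground, hME]
    exact Set.inter_subset_right
  · -- transversality
    intro B hB
    have hbase := hAB B (hdual2 B hB)
    obtain ⟨y, hyX, hyB⟩ := hX.2.1 _ hbase
    rcases hyB with hyA | hyB
    · exact absurd hyA (fun h => hXAmem hyX h)
    · have hyE : y ∈ Set.Icc 1 n := by
        have := hB.subset_ground
        rw [dual_ground, hME] at this
        exact this hyB
      exact ⟨y, ⟨hyX, hyE⟩, hyB⟩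
  · -- minimality
    intro D' hD'
    obtain ⟨x, hxXE, hxD'⟩ := Set.exists_of_ssubset hD'
    have hxX : x ∈ X := hxXE.1
    have hxE : x ∈ Set.Icc 1 n := hxXE.2
    simp only [Set.mem_Icc] at hxE
    have hssub : X \ {x} ⊂ X := Set.sdiff_singleton_ssubset.mpr hxX
    obtain ⟨Bh, hBh, hBhX⟩ := hX.2.2 (X \ {x}) hssub
    obtain ⟨B₂, hB₂, hsubB⟩ := hdecomp Bh hBh
    have hBhXmem : ∀ y ∈ Bh, y ∈ X → y = x := by
      intro y hy hyX
      by_contra hne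
      have : y ∈ (X \ {x}) ∩ Bh := ⟨⟨hyX, hne⟩, hy⟩
      rw [hBhX] at this
      exact this
    -- B* := piSet n B₂ is an M✶-base
    obtain ⟨hpind, hpcard⟩ := pi_indep n r M₂ hE2 hpar2 hloop2 _ B₂ rfl hB₂.indep
    have hB₂c : B₂.ncard = n - r := by
      rw [hB₂.ncard_eq_ncard_of_isBase hE2base2, hIccCard]; omega
    have hdind : M✶.Indep (piSet n B₂) := by
      rw [← hres2, restrict_indep_iff]
      exact ⟨hpind, piSet_subset n B₂⟩
    have hdbase : M✶.IsBase (piSet n B₂) := hdbase_of_card _ hdind (by rw [hpcard, hB₂c])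
    refine ⟨piSet n B₂, hdbase, ?_⟩
    rw [Set.eq_empty_iff_forall_notMem]
    rintro j ⟨hjD', hjpi⟩
    have hjXE : j ∈ X ∩ Set.Icc 1 n := hD'.subset hjD'
    have hjX : j ∈ X := hjXE.1
    have hjE := Set.mem_Icc.mp hjXE.2
    have hjx : j ≠ x := fun h => hxD' (h ▸ hjD')
    rcases hjpi with ⟨hjB₂, _⟩ | ⟨_, hnjB₂⟩
    · exact hjx (hBhXmem j (hsubB hjB₂) hjX)
    · -- n + j ∈ B₂; then j > r, so n + j ∈ X by key; contradiction
      have hjr : r + 1 ≤ j := by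
        by_contra h
        have hl := hloop2 j (Set.mem_Icc.mpr ⟨by omega, by omega⟩)
        exact hl.2 (hB₂.indep.subset (Set.singleton_subset_iff.mpr hnjB₂))
      have hnjX : n + j ∈ X := key j hjX hjr hjE.2
      have hne : n + j ≠ x := by omega
      exact hne (hBhXmem _ (hsubB hnjB₂) hnjX)

end NL
end

section
/- Let D = (V, A) be a digraph and let Q be the poset (ordered by inclusion) of arc sets B ⊆ A such that the subdigraph D[B] is totally cyclic (every arc of B lies on a directed cycle of D[B]), with Möbius function μ_Q. Define the NL-coflow polynomial ψ(x) = Σ_{B ∈ Q} μ_Q(∅, B) · x^{rk(A/B)}, where rk(A/B) is the rank of the graphic matroid of D after contracting B. Then ψ evaluated at a positive integer k, times k^{c}, where c is the number of connected components of D, is a nonnegative integer for k large (in particular ψ(x) is a polynomial in x with integer coefficients). -/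
open Finset
namespace NL
variable {γ : Type*} [DecidableEq γ]

-- The Möbius function `μ(∅, B)` of the subposet of `Finset γ` selected by `P`
-- (assumed to contain `∅` as minimum), ordered by inclusion.
open Classical in
noncomputable def fmu (P : Finset γ → Prop) : Finset γ → ℤ := fun B =>
  if B = ∅ then 1
  else - ∑ C ∈ (B.powerset.filter (fun C => C ≠ B ∧ P C)).attach, fmu P C.1
termination_by B => B.card
decreasing_by
  have hC := C.2
  rw [Finset.mem_filter, Finset.mem_powerset] at hC
  exact Finset.card_lt_card (lt_of_le_of_ne hC.1 hC.2.1)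

/-- The lattice rank of `X` in the subposet of `Finset γ` selected by `P`:
the maximal length of a chain from `∅` to `X`. -/
noncomputable def fLatRk (P : Finset γ → Prop) (X : Finset γ) : ℕ :=
  sSup {k | ∃ c : Fin (k+1) → Finset γ, StrictMono c ∧ (∀ i, P (c i)) ∧
    c 0 = ∅ ∧ c (Fin.last k) = X}

variable {V : Type*}

/-- Reachability by a directed path using only arcs in `B`. -/
def Reaches (B : Set (V × V)) (u v : V) : Prop :=
  Relation.ReflTransGen (fun x y => (x, y) ∈ B) u v

/-- An arc set is totally cyclic if every arc lies on a directed cycle within it. -/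
def TotCyc (B : Set (V × V)) : Prop := ∀ a ∈ B, Reaches B a.2 a.1

/-- Connectivity in the underlying undirected graph of the arc set `B`. -/
def Conn (B : Set (V × V)) (u v : V) : Prop :=
  Relation.ReflTransGen (fun x y => (x, y) ∈ B ∨ (y, x) ∈ B) u v

/-- The vertices incident with an arc of `B`. -/
def verts (B : Set (V × V)) : Set V := {v | ∃ a ∈ B, a.1 = v ∨ a.2 = v}

/-- The number of connected components of the subgraph spanned by the arc set `B`. -/
noncomputable def ncomps (B : Set (V × V)) : ℕ :=
  {S : Set V | ∃ v ∈ verts B, S = {u | Conn B v u}}.ncard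

/-- The rank `|V(B)| - c(B)` of an arc set in the graphic matroid. -/
noncomputable def rkArc (B : Set (V × V)) : ℕ := (verts B).ncard - ncomps B


-- ===== auxiliary lemmas =====
section Aux
variable {V : Type*}

def connSetoid (X : Set (V × V)) : Setoid V :=
  ⟨Conn X, ⟨fun _ => Relation.ReflTransGen.refl,
    fun h => by
      haveI : Std.Symm (fun x y : V => (x, y) ∈ X ∨ (y, x) ∈ X) := ⟨fun _ _ hb => hb.symm⟩
      exact Relation.ReflTransGen.symmetric.symm _ _ h,
    fun h1 h2 => h1.trans h2⟩⟩

lemma conn_mono {X Y : Set (V × V)} (h : X ⊆ Y) {u v : V} (hc : Conn X u v) : Conn Y u v :=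
  Relation.ReflTransGen.mono (fun (_ _ : V) (hb : (_, _) ∈ X ∨ (_, _) ∈ X) => hb.imp (@h _) (@h _)) _ _ hc

def compSet (X : Set (V × V)) (v : V) : Set V := {u | Conn X v u}

lemma compSet_eq {X : Set (V × V)} {a b : V} (h : Conn X a b) : compSet X a = compSet X b := by
  ext u
  constructor
  · exact fun hu => ((connSetoid X).symm h).trans hu
  · exact fun hu => Relation.ReflTransGen.trans h hu

lemma conn_of_compSet_eq {X : Set (V × V)} {a b : V} (h : compSet X a = compSet X b) :
    Conn X a b := by
  have : b ∈ compSet X b := Relation.ReflTransGen.refl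
  rw [← h] at this; exact this

noncomputable def compEquiv (X : Set (V × V)) :
    Quotient (connSetoid X) ≃ Set.range (compSet X) := by
  refine Equiv.ofBijective (Quotient.lift (fun v => (⟨compSet X v, Set.mem_range_self v⟩ :
    Set.range (compSet X))) (fun a b h => Subtype.ext (compSet_eq h))) ⟨?_, ?_⟩
  · rintro ⟨a⟩ ⟨b⟩ hab
    exact Quotient.sound (conn_of_compSet_eq (congrArg Subtype.val hab))
  · rintro ⟨S, v, rfl⟩
    exact ⟨⟦v⟧, rfl⟩

lemma C_eq_card_quot (X : Set (V × V)) :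
    {S : Set V | ∃ v : V, S = {u | Conn X v u}}.ncard = Nat.card (Quotient (connSetoid X)) := by
  have hs : {S : Set V | ∃ v : V, S = {u | Conn X v u}} = Set.range (compSet X) := by
    ext S; simp [compSet, Set.mem_range, eq_comm]
  rw [hs, ← Nat.card_coe_set_eq, Nat.card_congr (compEquiv X).symm]

lemma compSet_isolated {X : Set (V × V)} {v : V} (hv : v ∉ verts X) :
    compSet X v = {v} := by
  ext u
  constructor
  · intro hu
    cases hu.cases_head with
    | inl h => exact h ▸ rfl
    | inr h =>
      obtain ⟨c, hc, _⟩ := h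
      exact absurd (hc.elim (fun h' => ⟨(v, c), h', Or.inl rfl⟩)
        (fun h' => ⟨(c, v), h', Or.inr rfl⟩)) hv
  · rintro rfl; exact Relation.ReflTransGen.refl

lemma rk_add_C [Fintype V] (X : Set (V × V)) :
    rkArc X + Nat.card (Quotient (connSetoid X)) = Fintype.card V := by
  rw [← C_eq_card_quot]
  have h1 : {S : Set V | ∃ v ∈ verts X, S = {u | Conn X v u}} = compSet X '' verts X := by
    ext S; simp [compSet, eq_comm]
  have h2 : {S : Set V | ∃ v : V, S = {u | Conn X v u}} =
      compSet X '' verts X ∪ compSet X '' (verts X)ᶜ := by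
    rw [← Set.image_union, Set.union_compl_self, Set.image_univ]
    ext S; simp [compSet, Set.mem_range, eq_comm]
  have h3 : compSet X '' (verts X)ᶜ = (fun v => ({v} : Set V)) '' (verts X)ᶜ := by
    apply Set.image_congr
    intro v hv; exact compSet_isolated hv
  have hdisj : Disjoint (compSet X '' verts X) (compSet X '' (verts X)ᶜ) := by
    rw [h3, Set.disjoint_left]
    rintro S ⟨w, hw, rfl⟩ ⟨v, hv, hSv⟩
    have : w ∈ compSet X w := Relation.ReflTransGen.refl
    rw [← hSv] at this
    rw [Set.mem_singleton_iff] at this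
    exact hv (this ▸ hw)
  have hcard3 : (compSet X '' (verts X)ᶜ).ncard = (verts X)ᶜ.ncard := by
    rw [h3]; exact Set.ncard_image_of_injective _ (fun a b h => Set.singleton_injective h)
  have hcompl : (verts X).ncard + (verts X)ᶜ.ncard = Fintype.card V := by
    rw [Set.ncard_add_ncard_compl, Nat.card_eq_fintype_card]
  have hle : (compSet X '' verts X).ncard ≤ (verts X).ncard := Set.ncard_image_le
  rw [h2, Set.ncard_union_eq hdisj, hcard3]
  unfold rkArc ncomps
  rw [h1]
  omega

lemma C_mono [Fintype V] {X Y : Set (V × V)} (h : X ⊆ Y) :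
    Nat.card (Quotient (connSetoid Y)) ≤ Nat.card (Quotient (connSetoid X)) := by
  apply Nat.card_le_card_of_surjective
    (Quotient.map (fun v => v) (fun a b hab => conn_mono h hab))
  rintro ⟨a⟩
  exact ⟨⟦a⟧, rfl⟩

open Classical in
lemma card_const_eq [Fintype V] (X : Set (V × V)) (k : ℕ) :
    (Finset.univ.filter (fun f : V → Fin k => ∀ a ∈ X, f a.1 = f a.2)).card =
      k ^ Nat.card (Quotient (connSetoid X)) := by
  classical
  have key : ∀ f : V → Fin k, (∀ a ∈ X, f a.1 = f a.2) ↔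
      (∀ u v : V, Conn X u v → f u = f v) := by
    intro f
    constructor
    · intro hf u v hc
      induction hc with
      | refl => rfl
      | tail _ step ih =>
        rcases step with h' | h'
        · exact ih.trans (hf _ h')
        · exact ih.trans (hf _ h').symm
    · intro hf a ha
      exact hf a.1 a.2 (Relation.ReflTransGen.single (Or.inl ha))
  have e : {f : V → Fin k // ∀ a ∈ X, f a.1 = f a.2} ≃
      (Quotient (connSetoid X) → Fin k) := by
    refine ⟨fun f => Quotient.lift f.1 (fun a b h => ((key f.1).mp f.2) a b h),
      fun g => ⟨fun v => g ⟦v⟧, fun a ha => congrArg g (Quotient.sound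
        (Relation.ReflTransGen.single (Or.inl ha)))⟩, fun f => Subtype.ext rfl, fun g => ?_⟩
    funext x; induction x using Quotient.ind; rfl
  rw [← Fintype.card_subtype, ← Nat.card_eq_fintype_card, Nat.card_congr e, Nat.card_fun,
    Nat.card_eq_fintype_card (α := Fin k), Fintype.card_fin]

open Classical in
lemma fmu_empty {γ : Type*} [DecidableEq γ] (P : Finset γ → Prop) : fmu P ∅ = 1 := by
  rw [fmu]; simp

open Classical in
lemma fmu_sum_eq_zero {γ : Type*} [DecidableEq γ] (P : Finset γ → Prop)
    (B : Finset γ) (hB : B ≠ ∅) (hPB : P B) : ∑ C ∈ B.powerset.filter P, fmu P C = 0 := by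
  have hrec : fmu P B = - ∑ C ∈ B.powerset.filter (fun C => C ≠ B ∧ P C), fmu P C := by
    rw [fmu, if_neg hB]
    congr 1
    exact Finset.sum_attach (B.powerset.filter (fun C => C ≠ B ∧ P C)) (fmu P)
  have hsplit : B.powerset.filter P =
      insert B (B.powerset.filter (fun C => C ≠ B ∧ P C)) := by
    ext C
    simp only [mem_filter, mem_insert, mem_powerset]
    constructor
    · rintro ⟨h1, h2⟩
      by_cases hC : C = B
      · exact Or.inl hC
      · exact Or.inr ⟨h1, hC, h2⟩
    · rintro (rfl | ⟨h1, _, h3⟩)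
      · exact ⟨subset_rfl, hPB⟩
      · exact ⟨h1, h3⟩
  rw [hsplit, Finset.sum_insert (by simp), hrec, neg_add_cancel]

open Classical in
lemma inner_nonneg [DecidableEq V] (M : Finset (V × V)) :
    0 ≤ ∑ B ∈ M.powerset.filter (fun B : Finset (V × V) => TotCyc (↑B : Set (V × V))),
      fmu (fun B : Finset (V × V) => TotCyc (↑B : Set (V × V))) B := by
  classical
  set P : Finset (V × V) → Prop := fun B => TotCyc (↑B : Set (V × V)) with hP
  set Bs : Finset (V × V) := (M.powerset.filter P).sup id with hBs
  have hmax : ∀ B ∈ M.powerset.filter P, B ⊆ Bs := fun B hB => Finset.le_sup (f := id) hB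
  have hsubM : Bs ⊆ M := Finset.sup_le (fun B hB => mem_powerset.mp (mem_filter.mp hB).1)
  have hPBs : P Bs := by
    intro a ha
    obtain ⟨B, hB, haB⟩ := Finset.mem_sup.mp ha
    have : Reaches (↑B : Set (V × V)) a.2 a.1 := (mem_filter.mp hB).2 a haB
    exact Relation.ReflTransGen.mono (fun x y hxy => (hmax B hB) hxy) _ _ this
  have hidx : M.powerset.filter P = Bs.powerset.filter P := by
    ext B
    simp only [mem_filter, mem_powerset]
    constructor
    · intro h
      exact ⟨hmax B (mem_filter.mpr ⟨mem_powerset.mpr h.1, h.2⟩), h.2⟩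
    · rintro ⟨h1, h2⟩
      exact ⟨h1.trans hsubM, h2⟩
  rw [hidx]
  by_cases hBse : Bs = ∅
  · rw [hBse] at hPBs ⊢
    have hps : (∅ : Finset (V × V)).powerset.filter P = {∅} := by
      rw [Finset.powerset_empty, Finset.filter_singleton, if_pos hPBs]
    rw [hps, Finset.sum_singleton]
    rw [show fmu (fun B : Finset (V × V) => TotCyc (↑B : Set (V × V))) ∅ = 1 from fmu_empty _]
    norm_num
  · rw [fmu_sum_eq_zero P Bs hBse hPBs]

lemma count_eq [Fintype V] [DecidableEq V] (B : Finset (V × V)) (k : ℕ) :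
    (∑ f : V → Fin k, if ∀ a ∈ B, f a.1 = f a.2 then (1 : ℤ) else 0) =
      (k : ℤ) ^ Nat.card (Quotient (connSetoid (↑B : Set (V × V)))) := by
  rw [Finset.sum_boole]
  have key : ∀ f : V → Fin k, (∀ a ∈ B, f a.1 = f a.2) ↔
      (∀ u v : V, Conn (↑B : Set (V × V)) u v → f u = f v) := by
    intro f
    constructor
    · intro hf u v hc
      induction hc with
      | refl => rfl
      | tail _ step ih =>
        rcases step with h' | h'
        · exact ih.trans (hf _ h')
        · exact ih.trans (hf _ h').symm
    · intro hf a ha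
      exact hf a.1 a.2 (Relation.ReflTransGen.single (Or.inl ha))
  have e : {f : V → Fin k // ∀ a ∈ B, f a.1 = f a.2} ≃
      (Quotient (connSetoid (↑B : Set (V × V))) → Fin k) := by
    refine ⟨fun f => Quotient.lift f.1 (fun a b h => ((key f.1).mp f.2) a b h),
      fun g => ⟨fun v => g ⟦v⟧, fun a ha => congrArg g (Quotient.sound
        (Relation.ReflTransGen.single (Or.inl ha)))⟩, fun f => Subtype.ext rfl, fun g => ?_⟩
    funext x; induction x using Quotient.ind; rfl
  have hn : (Finset.univ.filter (fun f : V → Fin k => ∀ a ∈ B, f a.1 = f a.2)).card =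
      k ^ Nat.card (Quotient (connSetoid (↑B : Set (V × V)))) := by
    rw [← Fintype.card_subtype, ← Nat.card_eq_fintype_card, Nat.card_congr e, Nat.card_fun,
      Nat.card_eq_fintype_card (α := Fin k), Fintype.card_fin]
  rw [hn]
  push_cast
  rfl

end Aux


-- STATEMENT 14: the NL-coflow polynomial
-- `ψ(x) = Σ_{B ∈ Q} μ_Q(∅,B) x^{rk(A/B)}` of a digraph `D = (V, Arcs)`, where `Q` is
-- the poset of totally cyclic arc sets, satisfies: `ψ(k) · k^c ≥ 0` for all large
-- enough positive integers `k`, where `c` is the number of connected components of `D`.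
open Classical in
theorem coflow_nonneg {V : Type*} [Fintype V] [DecidableEq V]
    (Arcs : Finset (V × V)) :
    ∃ N : ℕ, ∀ k : ℕ, N ≤ k →
      0 ≤ (∑ B ∈ Arcs.powerset.filter (fun B : Finset (V × V) => TotCyc (↑B : Set (V × V))),
            fmu (fun B : Finset (V × V) => TotCyc (↑B : Set (V × V))) B *
              (k : ℤ) ^ (rkArc (↑Arcs : Set (V × V)) - rkArc (↑B : Set (V × V)))) *
          (k : ℤ) ^ ({S : Set V | ∃ v : V, S = {u | Conn (↑Arcs : Set (V × V)) v u}}.ncard) := by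
  refine ⟨0, fun k _ => ?_⟩
  rw [C_eq_card_quot, Finset.sum_mul]
  have hstep : ∀ B ∈ Arcs.powerset.filter (fun B : Finset (V × V) => TotCyc (↑B : Set (V × V))),
      fmu (fun B : Finset (V × V) => TotCyc (↑B : Set (V × V))) B *
          (k : ℤ) ^ (rkArc (↑Arcs : Set (V × V)) - rkArc (↑B : Set (V × V))) *
          (k : ℤ) ^ (Nat.card (Quotient (connSetoid (↑Arcs : Set (V × V))))) =
      ∑ f : V → Fin k, (if ∀ a ∈ B, f a.1 = f a.2 then
          fmu (fun B : Finset (V × V) => TotCyc (↑B : Set (V × V))) B else 0) := by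
    intro B hB
    have hsub : (↑B : Set (V × V)) ⊆ (↑Arcs : Set (V × V)) :=
      Finset.coe_subset.mpr (Finset.mem_powerset.mp (Finset.mem_filter.mp hB).1)
    have h1 := rk_add_C (↑Arcs : Set (V × V))
    have h2 := rk_add_C (↑B : Set (V × V))
    have h3 := C_mono hsub
    have hexp : (rkArc (↑Arcs : Set (V × V)) - rkArc (↑B : Set (V × V))) +
        Nat.card (Quotient (connSetoid (↑Arcs : Set (V × V)))) =
        Nat.card (Quotient (connSetoid (↑B : Set (V × V)))) := by omega
    rw [mul_assoc, ← pow_add, hexp, ← count_eq B k, Finset.mul_sum]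
    exact Finset.sum_congr rfl fun f _ => by split <;> ring
  rw [Finset.sum_congr rfl hstep, Finset.sum_comm]
  apply Finset.sum_nonneg
  intro f _
  have hidx : (Arcs.powerset.filter (fun B : Finset (V × V) => TotCyc (↑B : Set (V × V)))).filter
        (fun B => ∀ a ∈ B, f a.1 = f a.2) =
      ((Arcs.filter (fun a => f a.1 = f a.2)).powerset.filter
        (fun B : Finset (V × V) => TotCyc (↑B : Set (V × V)))) := by
    ext B
    simp only [Finset.mem_filter, Finset.mem_powerset, Finset.subset_iff]
    constructor
    · rintro ⟨⟨h1, h2⟩, h3⟩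
      exact ⟨fun x hx => ⟨h1 hx, h3 x hx⟩, h2⟩
    · rintro ⟨h1, h2⟩
      exact ⟨⟨fun x hx => (h1 hx).1, h2⟩, fun x hx => (h1 hx).2⟩
  rw [← Finset.sum_filter, hidx]
  exact inner_nonneg _

end NL
end

section
/- Let M be an oriented matroid on a finite ground set E with nonnegative covector lattice L₊ (covectors with no negative entries, ordered componentwise with 0 < +) and Möbius function μ. Define φ(x) = Σ_{X ∈ L₊} μ(∅, X) x^{rk*(M \ supp(X))}, where rk*(N) = |ground set of N| − rk(N). If M is the graphic oriented matroid of a digraph D, then φ coincides with the NL-flow polynomial of D defined via directed cuts: φ(x) = Σ_{C ∈ 𝒞} μ_{𝒞}(A, A \ C) x^{|A \ C| − rk(A \ C)}, where 𝒞 is the poset of complements of unions of directed cuts of D ordered by reverse inclusion. -/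
open Finset
namespace NL
variable {γ : Type*} [DecidableEq γ]

variable {V : Type*}

-- The Möbius function `μ(A, Y)` of the subposet of `Finset γ` selected by `P`
-- (a family of subsets of `Arcs` containing `Arcs` as its top element),
-- ordered by *reverse* inclusion.
open Classical in
noncomputable def fmuRev (Arcs : Finset γ) (P : Finset γ → Prop) : Finset γ → ℤ := fun Y =>
  if Y = Arcs then 1
  else - ∑ Z ∈ (Arcs.powerset.filter (fun Z => Y ⊆ Z ∧ Z ≠ Y ∧ P Z)).attach,
          fmuRev Arcs P Z.1
termination_by Y => (Arcs \ Y).card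
decreasing_by
  have hZ := Z.2
  rw [Finset.mem_filter, Finset.mem_powerset] at hZ
  have h1 := Finset.card_lt_card (lt_of_le_of_ne hZ.2.1 (Ne.symm hZ.2.2.1))
  have h2 := Finset.card_le_card hZ.1
  rw [Finset.card_sdiff, Finset.card_sdiff, Finset.inter_eq_left.mpr hZ.1,
    Finset.inter_eq_left.mpr (hZ.2.1.trans hZ.1)]
  omega

variable {V : Type*}

/-- A directed cut of the digraph with arc set `Arcs`: the nonempty set of arcs
leaving a vertex set `S` which no arc enters. -/
def IsDirCut [DecidableEq V] (Arcs : Finset (V × V)) (C : Finset (V × V)) : Prop :=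
  ∃ S : Finset V, C = Arcs.filter (fun a => a.1 ∈ S ∧ a.2 ∉ S) ∧
    Arcs.filter (fun a => a.1 ∉ S ∧ a.2 ∈ S) = ∅ ∧ C ≠ ∅

/-- A union of directed cuts (these are exactly the supports of the nonnegative
covectors of the graphic oriented matroid). -/
def UnionDirCuts [DecidableEq V] (Arcs : Finset (V × V)) (X : Finset (V × V)) : Prop :=
  ∃ 𝒮 : Finset (Finset (V × V)), (∀ C ∈ 𝒮, IsDirCut Arcs C) ∧ X = 𝒮.sup id

-- STATEMENT 15: for the graphic oriented matroid of a digraph, the NL-flow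
-- polynomial `φ(x) = Σ_{X ∈ L₊} μ(∅,X) x^{rk*(A \ X)}`, with `L₊` realized by the
-- supports of nonnegative covectors (= unions of directed cuts ordered by
-- inclusion), coincides with the NL-flow polynomial defined on the poset `𝒞` of
-- complements of unions of directed cuts ordered by reverse inclusion.
open Classical in
lemma fmu_eq_fmuRev (Arcs : Finset γ) (P : Finset γ → Prop) :
    ∀ X : Finset γ, X ⊆ Arcs →
      fmu P X = fmuRev Arcs (fun Z => P (Arcs \ Z)) (Arcs \ X) := by
  intro X
  induction X using Finset.strongInduction with
  | _ X ih =>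
    intro hX
    rw [fmu, fmuRev]
    by_cases h0 : X = ∅
    · subst h0; simp
    · have hne : Arcs \ X ≠ Arcs := by
        intro h
        apply h0
        have hd := Finset.sdiff_eq_self_iff_disjoint.mp h
        exact Finset.eq_empty_of_forall_notMem fun a ha =>
          (Finset.disjoint_left.mp hd (hX ha)) ha
      rw [if_neg h0, if_neg hne]
      congr 1
      rw [Finset.sum_attach _ (fun C => fmu P C),
          Finset.sum_attach _ (fun Z => fmuRev Arcs (fun Z => P (Arcs \ Z)) Z)]
      refine Finset.sum_nbij' (fun C => Arcs \ C) (fun Z => Arcs \ Z) ?_ ?_ ?_ ?_ ?_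
      · intro C hC
        rw [Finset.mem_filter, Finset.mem_powerset] at hC ⊢
        obtain ⟨hCX, hCne, hPC⟩ := hC
        have hCA : C ⊆ Arcs := hCX.trans hX
        refine ⟨Finset.sdiff_subset, Finset.sdiff_subset_sdiff le_rfl hCX, ?_, ?_⟩
        · intro h
          apply hCne
          have := congrArg (fun T => Arcs \ T) h
          simpa [Finset.sdiff_sdiff_eq_self hCA, Finset.sdiff_sdiff_eq_self hX] using this
        · rwa [Finset.sdiff_sdiff_eq_self hCA]
      · intro Z hZ
        rw [Finset.mem_filter, Finset.mem_powerset] at hZ ⊢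
        obtain ⟨hZA, hXZ, hZne, hPZ⟩ := hZ
        refine ⟨?_, ?_, hPZ⟩
        · calc Arcs \ Z ⊆ Arcs \ (Arcs \ X) := Finset.sdiff_subset_sdiff le_rfl hXZ
            _ = X := Finset.sdiff_sdiff_eq_self hX
        · intro h
          apply hZne
          have := congrArg (fun T => Arcs \ T) h
          simpa [Finset.sdiff_sdiff_eq_self hZA] using this
      · intro C hC
        rw [Finset.mem_filter, Finset.mem_powerset] at hC
        exact Finset.sdiff_sdiff_eq_self (hC.1.trans hX)
      · intro Z hZ
        rw [Finset.mem_filter, Finset.mem_powerset] at hZ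
        exact Finset.sdiff_sdiff_eq_self hZ.1
      · intro C hC
        rw [Finset.mem_filter, Finset.mem_powerset] at hC
        exact ih C (lt_of_le_of_ne hC.1 hC.2.1) (hC.1.trans hX)

open Classical in
theorem flow_polynomial_graphic {V : Type*} [Fintype V] [DecidableEq V]
    (Arcs : Finset (V × V)) :
    ∀ k : ℤ,
      (∑ X ∈ Arcs.powerset.filter (UnionDirCuts Arcs),
        fmu (UnionDirCuts Arcs) X *
          k ^ ((Arcs \ X).card - rkArc (↑(Arcs \ X) : Set (V × V)))) =
      ∑ Y ∈ Arcs.powerset.filter (fun Y : Finset (V × V) => UnionDirCuts Arcs (Arcs \ Y)),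
        fmuRev Arcs (fun Z : Finset (V × V) => UnionDirCuts Arcs (Arcs \ Z)) Y *
          k ^ (Y.card - rkArc (↑Y : Set (V × V))) := by
  intro k
  refine Finset.sum_nbij' (fun X => Arcs \ X) (fun Y => Arcs \ Y) ?_ ?_ ?_ ?_ ?_
  · intro X hX
    rw [Finset.mem_filter, Finset.mem_powerset] at hX ⊢
    exact ⟨Finset.sdiff_subset, by rw [Finset.sdiff_sdiff_eq_self hX.1]; exact hX.2⟩
  · intro Y hY
    rw [Finset.mem_filter, Finset.mem_powerset] at hY ⊢
    exact ⟨Finset.sdiff_subset, hY.2⟩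
  · intro X hX
    rw [Finset.mem_filter, Finset.mem_powerset] at hX
    exact Finset.sdiff_sdiff_eq_self hX.1
  · intro Y hY
    rw [Finset.mem_filter, Finset.mem_powerset] at hY
    exact Finset.sdiff_sdiff_eq_self hY.1
  · intro X hX
    rw [Finset.mem_filter, Finset.mem_powerset] at hX
    rw [fmu_eq_fmuRev Arcs (UnionDirCuts Arcs) X hX.1]

end NL
end
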